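/- arXiv:2408.12931 — 3 statements merged into one kernel-verified Lean document; each statement's English description precedes it below -/
import Mathlib

section
/- For an alphabet Σ and a semigroup S, the set Σ_S^* of S-exponent-strings, equipped with the concatenation operation and the empty sequence λ, forms a monoid with identity λ. -/
namespace ExpStr

variable {α S : Type*}

/-- Concatenation of exponent-string representations, merging the boundary
terms when the base characters coincide. -/
def eCat [DecidableEq α] (op : S → S → S) (p q : List (α × S)) : List (α × S) :=
  match p.getLast?, q with
  | some (a, s), (b, t) :: q' =>
      if a = b then p.dropLast ++ (a, op s t) :: q' else p ++ q
  | _, _ => p ++ q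

/-- The defining property of an `S`-exponent-string:
consecutive base characters differ. -/
def IsExp (l : List (α × S)) : Prop := l.Chain' (fun x y => x.1 ≠ y.1)

/-- The exponent-string corresponding to a representation. -/
def eRep [DecidableEq α] (op : S → S → S) : List (α × S) → List (α × S)
  | [] => []
  | x :: xs => eCat op [x] (eRep op xs)

end ExpStr


namespace ExpStr
variable {α S : Type*} [DecidableEq α] (op : S → S → S)

theorem eCat_nil_left (q : List (α × S)) : eCat op [] q = q := by
  cases q <;> rfl

theorem eCat_nil_right (p : List (α × S)) : eCat op p [] = p := by
  unfold eCat
  split <;> simp_all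

theorem eCat_concat_cons (l : List (α × S)) (a : α) (s : S) (b : α) (t : S)
    (q' : List (α × S)) :
    eCat op (l ++ [(a, s)]) ((b, t) :: q') =
      if a = b then l ++ (a, op s t) :: q' else l ++ (a, s) :: (b, t) :: q' := by
  unfold eCat
  simp [List.getLast?_concat, List.dropLast_concat]

end ExpStr

open ExpStr in
/-- `(Σ_S^*, ·)` is a monoid with identity `λ`: concatenation of
`S`-exponent-strings is again an `S`-exponent-string, concatenation is
associative on exponent-strings, and the empty exponent-string is a two-sided
identity. -/
theorem expString_monoid {α S : Type*} [DecidableEq α] [Semigroup S] :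
    (∀ p q : List (α × S), IsExp p → IsExp q → IsExp (eCat (· * ·) p q)) ∧
    (∀ p q r : List (α × S), IsExp p → IsExp q → IsExp r →
      eCat (· * ·) (eCat (· * ·) p q) r = eCat (· * ·) p (eCat (· * ·) q r)) ∧
    (∀ p : List (α × S),
      eCat (· * ·) ([] : List (α × S)) p = p ∧ eCat (· * ·) p [] = p) := by
  refine ⟨?_, ?_, fun p => ⟨eCat_nil_left _ p, eCat_nil_right _ p⟩⟩
  · intro p q hp hq
    rcases q with _ | ⟨⟨b, t⟩, q'⟩
    · rw [eCat_nil_right]; exact hp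
    rcases List.eq_nil_or_concat p with rfl | ⟨l, ⟨a, s⟩, rfl⟩
    · rw [eCat_nil_left]; exact hq
    rw [List.concat_eq_append] at *
    rw [eCat_concat_cons]
    unfold IsExp List.Chain' at *
    rw [List.isChain_append] at hp
    split_ifs with hab
    · subst hab
      rw [List.isChain_append]
      rw [List.isChain_cons] at hq
      refine ⟨hp.1, ?_, ?_⟩
      · rw [List.isChain_cons]
        exact ⟨hq.1, hq.2⟩
      · simpa using hp.2.2
    · rw [List.isChain_append]
      refine ⟨hp.1, ?_, ?_⟩
      · rw [List.isChain_cons_cons]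
        exact ⟨hab, hq⟩
      · simpa using hp.2.2
  · intro p q r _ _ _
    rcases q with _ | ⟨⟨b, t⟩, q'⟩
    · rw [eCat_nil_right, eCat_nil_left]
    rcases r with _ | ⟨⟨c, u⟩, r'⟩
    · rw [eCat_nil_right, eCat_nil_right]
    rcases List.eq_nil_or_concat p with rfl | ⟨p₀, ⟨a, s⟩, rfl⟩
    · rw [eCat_nil_left, eCat_nil_left]
    rw [List.concat_eq_append]
    rcases List.eq_nil_or_concat q' with rfl | ⟨q₁, ⟨b₂, t₂⟩, rfl⟩
    · rw [eCat_concat_cons, show ((b, t) :: ([] : List (α × S))) = [] ++ [(b, t)] from rfl,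
        eCat_concat_cons]
      split_ifs with h1 h2 h2
      · subst h1; subst h2
        rw [eCat_concat_cons, List.nil_append, eCat_concat_cons]
        simp [mul_assoc]
      · subst h1
        rw [eCat_concat_cons, List.nil_append, eCat_concat_cons]
        simp [h2]
      · subst h2
        simp only [List.nil_append]
        rw [show p₀ ++ [(a, s), (b, t)] = (p₀ ++ [(a, s)]) ++ [(b, t)] by simp,
          eCat_concat_cons, eCat_concat_cons]
        simp [h1]
      · simp only [List.nil_append]
        rw [show p₀ ++ [(a, s), (b, t)] = (p₀ ++ [(a, s)]) ++ [(b, t)] by simp,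
          eCat_concat_cons, eCat_concat_cons]
        simp [h1, h2]
    · simp only [List.concat_eq_append]
      rw [eCat_concat_cons,
        show (b, t) :: (q₁ ++ [(b₂, t₂)]) = ((b, t) :: q₁) ++ [(b₂, t₂)] by simp,
        eCat_concat_cons]
      split_ifs with h1 h2 h2
      · rw [show p₀ ++ (a, s * t) :: (q₁ ++ [(b₂, t₂)])
            = (p₀ ++ (a, s * t) :: q₁) ++ [(b₂, t₂)] by simp,
          eCat_concat_cons, List.cons_append, eCat_concat_cons]
        simp [h1, h2]
      · rw [show p₀ ++ (a, s * t) :: (q₁ ++ [(b₂, t₂)])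
            = (p₀ ++ (a, s * t) :: q₁) ++ [(b₂, t₂)] by simp,
          eCat_concat_cons, List.cons_append, eCat_concat_cons]
        simp [h1, h2]
      · rw [show p₀ ++ (a, s) :: ((b, t) :: q₁ ++ [(b₂, t₂)])
            = (p₀ ++ (a, s) :: (b, t) :: q₁) ++ [(b₂, t₂)] by simp,
          eCat_concat_cons, List.cons_append, eCat_concat_cons]
        simp [h1, h2]
      · rw [show p₀ ++ (a, s) :: ((b, t) :: q₁ ++ [(b₂, t₂)])
            = (p₀ ++ (a, s) :: (b, t) :: q₁) ++ [(b₂, t₂)] by simp,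
          eCat_concat_cons, List.cons_append, eCat_concat_cons]
        simp [h1, h2]
end

section
/- For ℝ⁺-exponent-strings p₁ and p₂, there exists an exp-matching E from p₁ to p₂ whose cost equals the infimum over all exp-matchings of the cost; that is, the infimum defining the exp-edit distance is attained as a minimum. -/
noncomputable section
namespace ExpStr
open MeasureTheory

variable {α : Type*}

/-- Length of an `ℝ⁺`-exponent-string: the sum of its exponents. -/
def eLen (l : List (α × ℝ)) : ℝ := (l.map Prod.snd).sum

/-- `ℝ⁺`-exponent-strings: consecutive base characters differ and all
exponents are positive reals. -/
def RES (l : List (α × ℝ)) : Prop := IsExp l ∧ ∀ x ∈ l, 0 < x.2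

/-- Concatenation of `ℝ⁺`-exponent-strings (exponents added at the boundary). -/
def rcat [DecidableEq α] (p q : List (α × ℝ)) : List (α × ℝ) :=
  eCat (· + ·) p q

/-- The `ℕ`-exponent-string (run-length encoding) corresponding to a word. -/
def ofWord [DecidableEq α] (w : List α) : List (α × ℝ) :=
  eRep (· + ·) (w.map fun a => (a, (1 : ℝ)))

/-- Multiply every exponent by `k`. -/
def scaleE (k : ℝ) (l : List (α × ℝ)) : List (α × ℝ) :=
  l.map fun x => (x.1, k * x.2)

/-- The base character of the position `x` in an `ℝ⁺`-exponent-string. -/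
def charAt [Inhabited α] : List (α × ℝ) → ℝ → α
  | [], _ => default
  | (a, s) :: t, x => if x < s then a else charAt t (x - s)

/-- A single exp-edit operation applied to an infix, with its cost:
insertion `λ → a^q`, deletion `a^q → λ`, or substitution `a^q → b^q`. -/
def Step [DecidableEq α] (wdel wins : α → ℝ) (wsub : α → α → ℝ)
    (u v : List (α × ℝ)) (c : ℝ) : Prop :=
  ∃ p₁ p₂ : List (α × ℝ), RES p₁ ∧ RES p₂ ∧
    ((∃ a q, 0 < q ∧ u = rcat p₁ p₂ ∧ v = rcat p₁ (rcat [(a, q)] p₂) ∧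
        c = q * wins a) ∨
     (∃ a q, 0 < q ∧ u = rcat p₁ (rcat [(a, q)] p₂) ∧ v = rcat p₁ p₂ ∧
        c = q * wdel a) ∨
     (∃ a b q, 0 < q ∧ u = rcat p₁ (rcat [(a, q)] p₂) ∧
        v = rcat p₁ (rcat [(b, q)] p₂) ∧ c = q * wsub a b))

/-- `EditCost wdel wins wsub u v c` holds iff there is a finite exp-edit
sequence from `u` to `v` of total cost `c`. -/
inductive EditCost [DecidableEq α] (wdel wins : α → ℝ) (wsub : α → α → ℝ)
    (u : List (α × ℝ)) : List (α × ℝ) → ℝ → Prop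
  | refl : EditCost wdel wins wsub u u 0
  | step {p q : List (α × ℝ)} {c c' : ℝ} :
      EditCost wdel wins wsub u p c → Step wdel wins wsub p q c' →
      EditCost wdel wins wsub u q (c + c')

/-- Exp-edit distance: the infimum cost of exp-edit sequences. -/
def eDist [DecidableEq α] (wdel wins : α → ℝ) (wsub : α → α → ℝ)
    (u v : List (α × ℝ)) : ℝ :=
  sInf {c | EditCost wdel wins wsub u v c}

/-- Exp-edit sequences all of whose intermediate terms satisfy `P`. -/
inductive EditCostIn [DecidableEq α] (P : List (α × ℝ) → Prop)
    (wdel wins : α → ℝ) (wsub : α → α → ℝ)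
    (u : List (α × ℝ)) : List (α × ℝ) → ℝ → Prop
  | refl : EditCostIn P wdel wins wsub u u 0
  | step {p q : List (α × ℝ)} {c c' : ℝ} :
      EditCostIn P wdel wins wsub u p c → Step wdel wins wsub p q c' → P q →
      EditCostIn P wdel wins wsub u q (c + c')

/-- All exponents are positive integers. -/
def IntExp (l : List (α × ℝ)) : Prop := ∀ x ∈ l, ∃ n : ℕ, x.2 = n

/-- All exponents are (positive) rationals. -/
def RatExp (l : List (α × ℝ)) : Prop := ∀ x ∈ l, ∃ r : ℚ, x.2 = r

/-- A single classical string edit operation with its cost. -/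
def SStep (wdel wins : α → ℝ) (wsub : α → α → ℝ) (u v : List α) (c : ℝ) : Prop :=
  ∃ p₁ p₂ : List α,
    ((∃ a, u = p₁ ++ p₂ ∧ v = p₁ ++ a :: p₂ ∧ c = wins a) ∨
     (∃ a, u = p₁ ++ a :: p₂ ∧ v = p₁ ++ p₂ ∧ c = wdel a) ∨
     (∃ a b, u = p₁ ++ a :: p₂ ∧ v = p₁ ++ b :: p₂ ∧ c = wsub a b))

/-- Total costs of classical string edit sequences. -/
inductive SEditCost (wdel wins : α → ℝ) (wsub : α → α → ℝ) (u : List α) :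
    List α → ℝ → Prop
  | refl : SEditCost wdel wins wsub u u 0
  | step {p q : List α} {c c' : ℝ} :
      SEditCost wdel wins wsub u p c → SStep wdel wins wsub p q c' →
      SEditCost wdel wins wsub u q (c + c')

/-- Classical string edit distance. -/
def sDist (wdel wins : α → ℝ) (wsub : α → α → ℝ) (u v : List α) : ℝ :=
  sInf {c | SEditCost wdel wins wsub u v c}

/-- X-projection of a diagonal segment `(x₀, y₀, t)`. -/
def mSegX (m : ℝ × ℝ × ℝ) : Set ℝ := Set.Ico m.1 (m.1 + m.2.2)

/-- Y-projection of a diagonal segment `(x₀, y₀, t)`. -/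
def mSegY (m : ℝ × ℝ × ℝ) : Set ℝ := Set.Ico m.2.1 (m.2.1 + m.2.2)

/-- X-projection of a matching. -/
def mEX (M : List (ℝ × ℝ × ℝ)) : Set ℝ := ⋃ m ∈ M, mSegX m

/-- Y-projection of a matching. -/
def mEY (M : List (ℝ × ℝ × ℝ)) : Set ℝ := ⋃ m ∈ M, mSegY m

/-- An exp-matching: a finite family of diagonal segments, each given as
`(x₀, y₀, t)` (start point and length parameter), lying in `[0,L₁)×[0,L₂)`,
with pairwise disjoint axis projections, and monotone. -/
def IsMatching (L₁ L₂ : ℝ) (M : List (ℝ × ℝ × ℝ)) : Prop :=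
  (∀ m ∈ M, 0 < m.2.2 ∧ 0 ≤ m.1 ∧ 0 ≤ m.2.1 ∧
      m.1 + m.2.2 ≤ L₁ ∧ m.2.1 + m.2.2 ≤ L₂) ∧
  M.Pairwise (fun m m' =>
      Disjoint (mSegX m) (mSegX m') ∧ Disjoint (mSegY m) (mSegY m')) ∧
  (∀ m ∈ M, ∀ m' ∈ M, ∀ s s' : ℝ, 0 ≤ s → s < m.2.2 → 0 ≤ s' → s' < m'.2.2 →
      m.1 + s < m'.1 + s' → m.2.1 + s ≤ m'.2.1 + s')

/-- Cost of an exp-matching: deletion and insertion integrals over the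
unmatched positions plus the substitution (arc-length) integral over the
segments (the factor `1/√2` cancels the speed `√2` of the parametrization). -/
def mCost [Inhabited α] (wdel wins : α → ℝ) (wsub : α → α → ℝ)
    (p₁ p₂ : List (α × ℝ)) (M : List (ℝ × ℝ × ℝ)) : ℝ :=
  (∫ x in Set.Ico 0 (eLen p₁) \ mEX M, wdel (charAt p₁ x)) +
  (∫ y in Set.Ico 0 (eLen p₂) \ mEY M, wins (charAt p₂ y)) +
  (M.map fun m => ∫ s in (0 : ℝ)..m.2.2,
      wsub (charAt p₁ (m.1 + s)) (charAt p₂ (m.2.1 + s))).sum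

end ExpStr
end
noncomputable section MatchAttain
open MeasureTheory Set ExpStr

namespace MatchAttain

variable {α : Type*}

lemma eLen_append (p q : List (α × ℝ)) : eLen (p ++ q) = eLen p + eLen q := by
  simp [eLen]

/-- prefix sums of exponents -/
def pref (p : List (α × ℝ)) (i : ℕ) : ℝ := eLen (p.take i)

lemma pref_zero (p : List (α × ℝ)) : pref p 0 = 0 := by simp [pref, eLen]

lemma pref_succ (p : List (α × ℝ)) (i : ℕ) (h : i < p.length) :
    pref p (i + 1) = pref p i + (p.get ⟨i, h⟩).2 := by
  have h1 : p.take (i+1) = p.take i ++ [p.get ⟨i, h⟩] := by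
    rw [List.take_succ]
    congr 1
    rw [List.getElem?_eq_getElem h]
    rfl
  rw [pref, h1, eLen_append]
  simp [pref, eLen]

lemma pref_le_succ (p : List (α × ℝ)) (hp : ∀ x ∈ p, 0 ≤ x.2) (i : ℕ) :
    pref p i ≤ pref p (i + 1) := by
  by_cases h : i < p.length
  · rw [pref_succ p i h]
    have := hp _ (List.get_mem p ⟨i, h⟩)
    linarith
  · push_neg at h
    have h1 : p.take i = p := List.take_of_length_le h
    have h2 : p.take (i+1) = p := List.take_of_length_le (by omega)
    simp [pref, h1, h2]

lemma pref_mono (p : List (α × ℝ)) (hp : ∀ x ∈ p, 0 ≤ x.2) : Monotone (pref p) :=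
  monotone_nat_of_le_succ (pref_le_succ p hp)

lemma pref_nonneg (p : List (α × ℝ)) (hp : ∀ x ∈ p, 0 ≤ x.2) (i : ℕ) :
    0 ≤ pref p i := pref_zero p ▸ pref_mono p hp (Nat.zero_le i)

lemma pref_length (p : List (α × ℝ)) : pref p p.length = eLen p := by
  simp [pref]

/-- the i-th block of positions -/
def block (p : List (α × ℝ)) (i : ℕ) : Set ℝ := Ico (pref p i) (pref p (i + 1))

lemma mem_block {p : List (α × ℝ)} {i : ℕ} {x : ℝ} :
    x ∈ block p i ↔ pref p i ≤ x ∧ x < pref p (i + 1) := Iff.rfl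

lemma measurableSet_block (p : List (α × ℝ)) (i : ℕ) : MeasurableSet (block p i) :=
  measurableSet_Ico

lemma block_subset (p : List (α × ℝ)) (hp : ∀ x ∈ p, 0 ≤ x.2) (i : ℕ) (hi : i < p.length) :
    block p i ⊆ Ico 0 (eLen p) := by
  intro x hx
  refine ⟨le_trans (pref_nonneg p hp i) hx.1, lt_of_lt_of_le hx.2 ?_⟩
  rw [← pref_length]
  exact pref_mono p hp hi

lemma block_disjoint (p : List (α × ℝ)) (hp : ∀ x ∈ p, 0 ≤ x.2) {i j : ℕ} (h : i ≠ j) :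
    Disjoint (block p i) (block p j) := by
  have key : ∀ i j : ℕ, i < j → Disjoint (block p i) (block p j) := by
    intro i j hij
    rw [block, block, Set.Ico_disjoint_Ico]
    calc min (pref p (i+1)) (pref p (j+1)) ≤ pref p (i+1) := min_le_left _ _
      _ ≤ pref p j := pref_mono p hp hij
      _ ≤ max (pref p i) (pref p j) := le_max_right _ _
  rcases lt_or_gt_of_ne h with hij | hij
  · exact key i j hij
  · exact (key j i hij).symm

lemma charAt_eq [Inhabited α] (p : List (α × ℝ)) (hp : ∀ x ∈ p, 0 < x.2) (i : ℕ) (hi : i < p.length)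
    {x : ℝ} (hx : x ∈ block p i) : charAt p x = (p.get ⟨i, hi⟩).1 := by
  induction p generalizing i x with
  | nil => simp at hi
  | cons hd tl ih =>
    obtain ⟨a, s⟩ := hd
    match i with
    | 0 =>
      have h1 : pref ((a,s)::tl) 1 = s := by
        simp [pref, eLen]
      rw [mem_block, pref_zero, h1] at hx
      simp [charAt, hx.2]
    | Nat.succ k =>
      have hk : k < tl.length := by simpa using hi
      have hpt : ∀ x ∈ tl, 0 < x.2 := fun x hx => hp x (List.mem_cons_of_mem _ hx)
      have hps : ∀ j : ℕ, pref ((a,s)::tl) (j+1) = s + pref tl j := by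
        intro j
        simp [pref, List.take_succ_cons, eLen]
      rw [mem_block, hps k, hps (k+1)] at hx
      have hxs : s ≤ x := by
        have := pref_nonneg tl (fun x hx => (hpt x hx).le) k
        linarith [hx.1]
      have hcc : charAt ((a,s)::tl) x = charAt tl (x - s) := by
        simp [charAt, not_lt.mpr hxs]
      rw [hcc]
      have hx' : x - s ∈ block tl k := by
        rw [mem_block]
        constructor <;> [linarith [hx.1]; linarith [hx.2]]
      exact ih hpt k hk hx'

lemma block_cover (p : List (α × ℝ)) (hp : ∀ x ∈ p, 0 < x.2) {x : ℝ}
    (hx : x ∈ Ico 0 (eLen p)) : ∃ i, i < p.length ∧ x ∈ block p i := by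
  induction p generalizing x with
  | nil =>
    exfalso
    have h1 := hx.1; have h2 := hx.2
    simp [eLen] at h2; linarith
  | cons hd tl ih =>
    obtain ⟨a, s⟩ := hd
    have hps : ∀ j : ℕ, pref ((a,s)::tl) (j+1) = s + pref tl j := by
      intro j; simp [pref, List.take_succ_cons, eLen]
    by_cases h : x < s
    · refine ⟨0, by simp, ?_⟩
      rw [mem_block, pref_zero, hps 0, pref_zero]
      exact ⟨hx.1, by simpa using h⟩
    · push_neg at h
      have hpt : ∀ x ∈ tl, 0 < x.2 := fun x hx => hp x (List.mem_cons_of_mem _ hx)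
      have hs : 0 < s := hp (a,s) (by simp)
      have hx' : x - s ∈ Ico 0 (eLen tl) := by
        constructor
        · simpa using h
        · have h2 := hx.2; simp only [eLen, List.map_cons, List.sum_cons, mem_Ico] at h2 ⊢
          linarith
      obtain ⟨i, hi, hbi⟩ := ih hpt hx'
      refine ⟨i+1, by simpa using hi, ?_⟩
      rw [mem_block] at hbi
      rw [mem_block, hps i, hps (i+1)]
      constructor <;> [linarith [hbi.1]; linarith [hbi.2]]

end MatchAttain
end MatchAttain

section PieceLemmas
open MeasureTheory Set ExpStr

namespace MatchAttain

lemma measure_partition {ι : Type*} [Fintype ι] (P : ι → Set ℝ)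
    (hPm : ∀ i, MeasurableSet (P i)) (hPd : Pairwise (Function.onFun Disjoint P))
    (A : Set ℝ) (hAm : MeasurableSet A) (hcov : A ⊆ ⋃ i, P i) :
    volume A = ∑ i, volume (A ∩ P i) := by
  have hA : A = ⋃ i, A ∩ P i := by
    rw [← Set.inter_iUnion]
    exact (Set.inter_eq_left.mpr hcov).symm
  have hd : Pairwise (Function.onFun Disjoint fun i => A ∩ P i) := fun i j h =>
    (hPd h).mono Set.inter_subset_right Set.inter_subset_right
  calc volume A = volume (⋃ i, A ∩ P i) := by rw [← hA]
    _ = ∑' i, volume (A ∩ P i) := measure_iUnion hd fun i => hAm.inter (hPm i)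
    _ = ∑ i, volume (A ∩ P i) := tsum_fintype _

lemma setIntegral_piecewise {ι : Type*} [Fintype ι] (P : ι → Set ℝ)
    (hPm : ∀ i, MeasurableSet (P i)) (hPd : Pairwise (Function.onFun Disjoint P))
    (A : Set ℝ) (hAm : MeasurableSet A) (hAfin : volume A ≠ ⊤)
    (hcov : A ⊆ ⋃ i, P i) (f : ℝ → ℝ) (c : ι → ℝ)
    (hc : ∀ i, ∀ x ∈ A ∩ P i, f x = c i) :
    ∫ x in A, f x = ∑ i, c i * (volume (A ∩ P i)).toReal := by
  have hA : A = ⋃ i, A ∩ P i := by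
    rw [← Set.inter_iUnion]
    exact (Set.inter_eq_left.mpr hcov).symm
  have hm : ∀ i, MeasurableSet (A ∩ P i) := fun i => hAm.inter (hPm i)
  have hd : Pairwise (Function.onFun Disjoint fun i => A ∩ P i) := fun i j h =>
    (hPd h).mono Set.inter_subset_right Set.inter_subset_right
  have hint : ∀ i, IntegrableOn f (A ∩ P i) := by
    intro i
    have h1 : IntegrableOn (fun _ => c i) (A ∩ P i) :=
      integrableOn_const (lt_of_le_of_lt
        (measure_mono Set.inter_subset_left) hAfin.lt_top).ne
    exact h1.congr_fun (fun x hx => (hc i x hx).symm) (hm i)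
  have hintU : IntegrableOn f (⋃ i, A ∩ P i) := by
    have : (⋃ i, A ∩ P i) = ⋃ i ∈ Finset.univ, A ∩ P i := by simp
    rw [this, integrableOn_finset_iUnion]
    exact fun i _ => hint i
  calc ∫ x in A, f x = ∫ x in ⋃ i, A ∩ P i, f x := by rw [← hA]
    _ = ∑' i, ∫ x in A ∩ P i, f x := integral_iUnion hm hd hintU
    _ = ∑ i, ∫ x in A ∩ P i, f x := tsum_fintype _
    _ = ∑ i, c i * (volume (A ∩ P i)).toReal := by
        refine Finset.sum_congr rfl fun i _ => ?_
        rw [setIntegral_congr_fun (hm i) (fun x hx => hc i x hx),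
          setIntegral_const, smul_eq_mul, mul_comm]
        rfl

lemma measurableSet_mSegX (m : ℝ × ℝ × ℝ) : MeasurableSet (mSegX m) := measurableSet_Ico
lemma measurableSet_mSegY (m : ℝ × ℝ × ℝ) : MeasurableSet (mSegY m) := measurableSet_Ico

lemma measurableSet_mEX (M : List (ℝ × ℝ × ℝ)) : MeasurableSet (mEX M) :=
  Set.Finite.measurableSet_biUnion (M.finite_toSet) fun m _ => measurableSet_mSegX m

lemma measurableSet_mEY (M : List (ℝ × ℝ × ℝ)) : MeasurableSet (mEY M) :=
  Set.Finite.measurableSet_biUnion (M.finite_toSet) fun m _ => measurableSet_mSegY m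

lemma measure_inter_list (B : Set ℝ) (hB : MeasurableSet B) (S : (ℝ × ℝ × ℝ) → Set ℝ)
    (hSm : ∀ m, MeasurableSet (S m)) (M : List (ℝ × ℝ × ℝ))
    (hd : M.Pairwise fun m m' => Disjoint (S m) (S m')) :
    volume (B ∩ ⋃ m ∈ M, S m) = (M.map fun m => volume (B ∩ S m)).sum := by
  induction M with
  | nil => simp
  | cons m M ih =>
    rw [List.pairwise_cons] at hd
    have hU : (⋃ m' ∈ (m :: M), S m') = S m ∪ ⋃ m' ∈ M, S m' := by
      simp [Set.iUnion_or, Set.iUnion_union_distrib]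
    have hMm : MeasurableSet (B ∩ ⋃ m' ∈ M, S m') :=
      hB.inter (Set.Finite.measurableSet_biUnion (M.finite_toSet) fun m' _ => hSm m')
    have hdisj : Disjoint (B ∩ S m) (B ∩ ⋃ m' ∈ M, S m') := by
      refine Disjoint.mono Set.inter_subset_right Set.inter_subset_right ?_
      rw [Set.disjoint_iUnion_right]
      intro m'
      rw [Set.disjoint_iUnion_right]
      exact fun hm' => hd.1 m' hm'
    rw [hU, Set.inter_union_distrib_left, measure_union hdisj hMm, ih hd.2]
    simp

end MatchAttain
end PieceLemmas

noncomputable section MainSec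
open MeasureTheory Set ExpStr

namespace MatchAttain

variable {α : Type*} [Inhabited α]

/-- parameter set of a segment matching block `i` of `p₁` with block `j` of `p₂` -/
def cellS (p₁ p₂ : List (α × ℝ)) (m : ℝ × ℝ × ℝ) (i j : ℕ) : Set ℝ :=
  Ico (0:ℝ) m.2.2 ∩ ((fun s => m.1 + s) ⁻¹' block p₁ i) ∩ ((fun s => m.2.1 + s) ⁻¹' block p₂ j)

def sig (p₁ p₂ : List (α × ℝ)) (m : ℝ × ℝ × ℝ) (i j : ℕ) : ℝ :=
  (volume (cellS p₁ p₂ m i j)).toReal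

def tOf (p₁ p₂ : List (α × ℝ)) (M : List (ℝ × ℝ × ℝ)) :
    Fin p₁.length × Fin p₂.length → ℝ :=
  fun ij => (M.map fun m => sig p₁ p₂ m ij.1 ij.2).sum

def costT (wdel wins : α → ℝ) (wsub : α → α → ℝ) (p₁ p₂ : List (α × ℝ))
    (t : Fin p₁.length × Fin p₂.length → ℝ) : ℝ :=
  (∑ i, wdel (p₁.get i).1 * ((p₁.get i).2 - ∑ j, t (i, j))) +
  (∑ j, wins (p₂.get j).1 * ((p₂.get j).2 - ∑ i, t (i, j))) +
  ∑ ij : Fin p₁.length × Fin p₂.length, t ij * wsub (p₁.get ij.1).1 (p₂.get ij.2).1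

def Feas (p₁ p₂ : List (α × ℝ)) (t : Fin p₁.length × Fin p₂.length → ℝ) : Prop :=
  (∀ ij, 0 ≤ t ij) ∧ (∀ i, ∑ j, t (i, j) ≤ (p₁.get i).2) ∧
  (∀ j, ∑ i, t (i, j) ≤ (p₂.get j).2) ∧
  (∀ i i' : Fin p₁.length, ∀ j j' : Fin p₂.length,
    (i : ℕ) < i' → (j' : ℕ) < j → t (i, j) = 0 ∨ t (i', j') = 0)

omit [Inhabited α] in
lemma measurable_cellS (p₁ p₂ : List (α × ℝ)) (m : ℝ × ℝ × ℝ) (i j : ℕ) :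
    MeasurableSet (cellS p₁ p₂ m i j) :=
  ((measurableSet_Ico.inter ((measurable_id.const_add m.1) measurableSet_Ico)).inter
    ((measurable_id.const_add m.2.1) measurableSet_Ico))

omit [Inhabited α] in
lemma cellS_subset (p₁ p₂ : List (α × ℝ)) (m : ℝ × ℝ × ℝ) (i j : ℕ) :
    cellS p₁ p₂ m i j ⊆ Ico 0 m.2.2 :=
  fun _ hs => hs.1.1

omit [Inhabited α] in
lemma vol_cellS_ne_top (p₁ p₂ : List (α × ℝ)) (m : ℝ × ℝ × ℝ) (i j : ℕ) :
    volume (cellS p₁ p₂ m i j) ≠ ⊤ :=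
  ne_top_of_le_ne_top (by simp [Real.volume_Ico]) (measure_mono (cellS_subset p₁ p₂ m i j))

omit [Inhabited α] in
lemma sig_nonneg (p₁ p₂ : List (α × ℝ)) (m : ℝ × ℝ × ℝ) (i j : ℕ) :
    0 ≤ sig p₁ p₂ m i j := ENNReal.toReal_nonneg

omit [Inhabited α] in
lemma vol_block (p : List (α × ℝ)) (i : Fin p.length) :
    volume (block p (i : ℕ)) = ENNReal.ofReal ((p.get i).2) := by
  rw [block, Real.volume_Ico, pref_succ p i i.2]
  congr 1
  simp

omit [Inhabited α] in
lemma vol_block_ne_top (p : List (α × ℝ)) (i : Fin p.length) :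
    volume (block p (i : ℕ)) ≠ ⊤ := by rw [vol_block]; simp

omit [Inhabited α] in
lemma list_sum_ne_top (l : List ENNReal) (h : ∀ x ∈ l, x ≠ ⊤) : l.sum ≠ ⊤ := by
  induction l with
  | nil => simp
  | cons x l ih =>
    rw [List.sum_cons]
    exact ENNReal.add_ne_top.2 ⟨h x (List.mem_cons_self),
      ih fun y hy => h y (List.mem_cons_of_mem _ hy)⟩

omit [Inhabited α] in
lemma toReal_list_sum (l : List ENNReal) (h : ∀ x ∈ l, x ≠ ⊤) :
    l.sum.toReal = (l.map ENNReal.toReal).sum := by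
  induction l with
  | nil => simp
  | cons x l ih =>
    rw [List.sum_cons, ENNReal.toReal_add (h x (List.mem_cons_self))
      (list_sum_ne_top l fun y hy => h y (List.mem_cons_of_mem _ hy)),
      List.map_cons, List.sum_cons, ih fun y hy => h y (List.mem_cons_of_mem _ hy)]

omit [Inhabited α] in
lemma finset_sum_list_sum {ι γ : Type*} [Fintype ι] (M : List γ) (f : γ → ι → ℝ) :
    ∑ i, (M.map fun m => f m i).sum = (M.map fun m => ∑ i, f m i).sum := by
  induction M with
  | nil => simp
  | cons m M ih => simp [Finset.sum_add_distrib, ih]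

end MatchAttain
end MainSec

noncomputable section SegSec
open MeasureTheory Set ExpStr

namespace MatchAttain

variable {α : Type*} [Inhabited α]

omit [Inhabited α] in
lemma cover_preimage (p : List (α × ℝ)) (hp : ∀ x ∈ p, 0 < x.2) (x₀ t : ℝ)
    (hx₀ : 0 ≤ x₀) (ht : x₀ + t ≤ eLen p) :
    Ico (0:ℝ) t ⊆ ⋃ i : Fin p.length, (fun s => x₀ + s) ⁻¹' block p i := by
  intro s hs
  have hmem : x₀ + s ∈ Ico 0 (eLen p) := by
    constructor
    · have := hs.1; linarith
    · have := hs.2; linarith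
  obtain ⟨i, hi, hbi⟩ := block_cover p hp hmem
  exact Set.mem_iUnion.2 ⟨⟨i, hi⟩, hbi⟩

omit [Inhabited α] in
lemma disjoint_preimage_block (p : List (α × ℝ)) (hp : ∀ x ∈ p, 0 < x.2) (x₀ : ℝ)
    {i j : Fin p.length} (h : i ≠ j) :
    Disjoint ((fun s => x₀ + s) ⁻¹' block p i) ((fun s => x₀ + s) ⁻¹' block p j) :=
  Disjoint.preimage _ (block_disjoint p (fun x hx => (hp x hx).le) (Fin.val_injective.ne h))

omit [Inhabited α] in
lemma rowSig (p₁ p₂ : List (α × ℝ)) (hp₂ : ∀ x ∈ p₂, 0 < x.2) (m : ℝ × ℝ × ℝ)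
    (hy₀ : 0 ≤ m.2.1) (hyt : m.2.1 + m.2.2 ≤ eLen p₂) (i : ℕ) :
    volume (Ico (0:ℝ) m.2.2 ∩ ((fun s => m.1 + s) ⁻¹' block p₁ i)) =
      ∑ j : Fin p₂.length, volume (cellS p₁ p₂ m i (j : ℕ)) := by
  have := measure_partition (fun j : Fin p₂.length => (fun s => m.2.1 + s) ⁻¹' block p₂ j)
    (fun j => (measurable_id.const_add m.2.1) (measurableSet_block p₂ j))
    (fun j k h => disjoint_preimage_block p₂ hp₂ m.2.1 h)
    (Ico (0:ℝ) m.2.2 ∩ ((fun s => m.1 + s) ⁻¹' block p₁ i))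
    (measurableSet_Ico.inter ((measurable_id.const_add m.1) (measurableSet_block p₁ i)))
    (fun s hs => cover_preimage p₂ hp₂ m.2.1 m.2.2 hy₀ hyt hs.1)
  exact this

omit [Inhabited α] in
lemma colSig (p₁ p₂ : List (α × ℝ)) (hp₁ : ∀ x ∈ p₁, 0 < x.2) (m : ℝ × ℝ × ℝ)
    (hx₀ : 0 ≤ m.1) (hxt : m.1 + m.2.2 ≤ eLen p₁) (j : ℕ) :
    volume (Ico (0:ℝ) m.2.2 ∩ ((fun s => m.2.1 + s) ⁻¹' block p₂ j)) =
      ∑ i : Fin p₁.length, volume (cellS p₁ p₂ m (i : ℕ) j) := by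
  have h := measure_partition (fun i : Fin p₁.length => (fun s => m.1 + s) ⁻¹' block p₁ i)
    (fun i => (measurable_id.const_add m.1) (measurableSet_block p₁ i))
    (fun i k h => disjoint_preimage_block p₁ hp₁ m.1 h)
    (Ico (0:ℝ) m.2.2 ∩ ((fun s => m.2.1 + s) ⁻¹' block p₂ j))
    (measurableSet_Ico.inter ((measurable_id.const_add m.2.1) (measurableSet_block p₂ j)))
    (fun s hs => cover_preimage p₁ hp₁ m.1 m.2.2 hx₀ hxt hs.1)
  rw [h]
  refine Finset.sum_congr rfl fun i _ => ?_
  congr 1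
  rw [cellS]
  ext s
  simp only [Set.mem_inter_iff, Set.mem_preimage]
  tauto

omit [Inhabited α] in
lemma transX (p₁ p₂ : List (α × ℝ)) (m : ℝ × ℝ × ℝ) (i : ℕ) :
    volume (Ico (0:ℝ) m.2.2 ∩ ((fun s => m.1 + s) ⁻¹' block p₁ i)) =
      volume (block p₁ i ∩ mSegX m) := by
  have h : Ico (0:ℝ) m.2.2 ∩ ((fun s => m.1 + s) ⁻¹' block p₁ i) =
      (fun s => m.1 + s) ⁻¹' (block p₁ i ∩ mSegX m) := by
    ext s
    simp only [Set.mem_inter_iff, Set.mem_preimage, mSegX, Set.mem_Ico]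
    constructor
    · rintro ⟨⟨h1, h2⟩, h3⟩
      exact ⟨h3, by linarith, by linarith⟩
    · rintro ⟨h3, h1, h2⟩
      exact ⟨⟨by linarith, by linarith⟩, h3⟩
  rw [h, measure_preimage_add]

omit [Inhabited α] in
lemma transY (p₁ p₂ : List (α × ℝ)) (m : ℝ × ℝ × ℝ) (j : ℕ) :
    volume (Ico (0:ℝ) m.2.2 ∩ ((fun s => m.2.1 + s) ⁻¹' block p₂ j)) =
      volume (block p₂ j ∩ mSegY m) := by
  have h : Ico (0:ℝ) m.2.2 ∩ ((fun s => m.2.1 + s) ⁻¹' block p₂ j) =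
      (fun s => m.2.1 + s) ⁻¹' (block p₂ j ∩ mSegY m) := by
    ext s
    simp only [Set.mem_inter_iff, Set.mem_preimage, mSegY, Set.mem_Ico]
    constructor
    · rintro ⟨⟨h1, h2⟩, h3⟩
      exact ⟨h3, by linarith, by linarith⟩
    · rintro ⟨h3, h1, h2⟩
      exact ⟨⟨by linarith, by linarith⟩, h3⟩
  rw [h, measure_preimage_add]

omit [Inhabited α] in
lemma intervalIntegral_eq_Ico {f : ℝ → ℝ} {t : ℝ} (ht : 0 ≤ t) :
    ∫ s in (0:ℝ)..t, f s = ∫ s in Ico (0:ℝ) t, f s := by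
  rw [intervalIntegral.integral_of_le ht, integral_Ioc_eq_integral_Ioo,
    ← integral_Ico_eq_integral_Ioo]

end MatchAttain
end SegSec

noncomputable section IntSec
open MeasureTheory Set ExpStr

namespace MatchAttain

variable {α : Type*} [Inhabited α]

lemma sub_integral (wsub : α → α → ℝ) (p₁ p₂ : List (α × ℝ))
    (hp₁ : ∀ x ∈ p₁, 0 < x.2) (hp₂ : ∀ x ∈ p₂, 0 < x.2) (m : ℝ × ℝ × ℝ)
    (hm : 0 < m.2.2 ∧ 0 ≤ m.1 ∧ 0 ≤ m.2.1 ∧ m.1 + m.2.2 ≤ eLen p₁ ∧ m.2.1 + m.2.2 ≤ eLen p₂) :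
    (∫ s in (0:ℝ)..m.2.2, wsub (charAt p₁ (m.1 + s)) (charAt p₂ (m.2.1 + s))) =
      ∑ ij : Fin p₁.length × Fin p₂.length,
        wsub (p₁.get ij.1).1 (p₂.get ij.2).1 * sig p₁ p₂ m ij.1 ij.2 := by
  obtain ⟨ht, hx₀, hy₀, hxt, hyt⟩ := hm
  rw [intervalIntegral_eq_Ico ht.le]
  have h := setIntegral_piecewise
    (fun ij : Fin p₁.length × Fin p₂.length =>
      ((fun s => m.1 + s) ⁻¹' block p₁ ij.1) ∩ ((fun s => m.2.1 + s) ⁻¹' block p₂ ij.2))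
    (fun ij => ((measurable_id.const_add m.1) (measurableSet_block p₁ ij.1)).inter
      ((measurable_id.const_add m.2.1) (measurableSet_block p₂ ij.2)))
    (by
      intro ij kl hne
      by_cases h1 : ij.1 = kl.1
      · have h2 : ij.2 ≠ kl.2 := fun h2 => hne (Prod.ext h1 h2)
        exact ((disjoint_preimage_block p₂ hp₂ m.2.1 h2).mono
          Set.inter_subset_right Set.inter_subset_right)
      · exact ((disjoint_preimage_block p₁ hp₁ m.1 h1).mono
          Set.inter_subset_left Set.inter_subset_left))
    (Ico (0:ℝ) m.2.2) measurableSet_Ico (by simp [Real.volume_Ico])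
    (by
      intro s hs
      have hmemx : m.1 + s ∈ Ico 0 (eLen p₁) :=
        ⟨by have := hs.1; linarith, by have := hs.2; linarith⟩
      have hmemy : m.2.1 + s ∈ Ico 0 (eLen p₂) :=
        ⟨by have := hs.1; linarith, by have := hs.2; linarith⟩
      obtain ⟨i, hi, hbi⟩ := block_cover p₁ hp₁ hmemx
      obtain ⟨j, hj, hbj⟩ := block_cover p₂ hp₂ hmemy
      exact Set.mem_iUnion.2 ⟨(⟨i, hi⟩, ⟨j, hj⟩), hbi, hbj⟩)
    (fun s => wsub (charAt p₁ (m.1 + s)) (charAt p₂ (m.2.1 + s)))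
    (fun ij => wsub (p₁.get ij.1).1 (p₂.get ij.2).1)
    (by
      rintro ⟨i, j⟩ s ⟨_, hbx, hby⟩
      dsimp only at hbx hby ⊢
      rw [charAt_eq p₁ hp₁ i i.2 hbx, charAt_eq p₂ hp₂ j j.2 hby])
  rw [h]
  refine Finset.sum_congr rfl fun ij _ => ?_
  congr 1
  simp only [sig, cellS, Set.inter_assoc]

lemma del_integral (wdel : α → ℝ) (p₁ p₂ : List (α × ℝ))
    (hp₁ : ∀ x ∈ p₁, 0 < x.2) (hp₂ : ∀ x ∈ p₂, 0 < x.2)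
    (M : List (ℝ × ℝ × ℝ)) (hM : IsMatching (eLen p₁) (eLen p₂) M) :
    (∫ x in Ico (0:ℝ) (eLen p₁) \ mEX M, wdel (charAt p₁ x)) =
      ∑ i : Fin p₁.length,
        wdel (p₁.get i).1 * ((p₁.get i).2 - ∑ j, tOf p₁ p₂ M (i, j)) := by
  have hEXm : MeasurableSet (mEX M) := measurableSet_mEX M
  have hAm : MeasurableSet (Ico (0:ℝ) (eLen p₁) \ mEX M) := measurableSet_Ico.diff hEXm
  have hAfin : volume (Ico (0:ℝ) (eLen p₁) \ mEX M) ≠ ⊤ :=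
    ne_top_of_le_ne_top (by simp [Real.volume_Ico]) (measure_mono Set.diff_subset)
  have h := setIntegral_piecewise (fun i : Fin p₁.length => block p₁ i)
    (fun i => measurableSet_block p₁ i)
    (fun i j h => block_disjoint p₁ (fun x hx => (hp₁ x hx).le) (Fin.val_injective.ne h))
    _ hAm hAfin
    (by
      intro x hx
      obtain ⟨i, hi, hbi⟩ := block_cover p₁ hp₁ hx.1
      exact Set.mem_iUnion.2 ⟨⟨i, hi⟩, hbi⟩)
    (fun x => wdel (charAt p₁ x)) (fun i => wdel (p₁.get i).1)
    (fun i x hx => by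
      rw [charAt_eq p₁ hp₁ i i.2 hx.2])
  rw [h]
  refine Finset.sum_congr rfl fun i _ => ?_
  congr 1
  -- compute the measure of unmatched part of block i
  have hsub : block p₁ (i : ℕ) ⊆ Ico 0 (eLen p₁) :=
    block_subset p₁ (fun x hx => (hp₁ x hx).le) i i.2
  have hset : (Ico (0:ℝ) (eLen p₁) \ mEX M) ∩ block p₁ (i : ℕ) =
      block p₁ (i : ℕ) \ (block p₁ (i : ℕ) ∩ mEX M) := by
    ext x
    simp only [Set.mem_diff, Set.mem_inter_iff, Set.mem_Ico]
    constructor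
    · rintro ⟨⟨_, hnEX⟩, hB⟩
      exact ⟨hB, fun h => hnEX h.2⟩
    · rintro ⟨hB, hn⟩
      exact ⟨⟨hsub hB, fun hEX => hn ⟨hB, hEX⟩⟩, hB⟩
  have hMd : M.Pairwise fun m m' => Disjoint (mSegX m) (mSegX m') :=
    hM.2.1.imp fun h => h.1
  have hmeas : volume (block p₁ (i : ℕ) ∩ mEX M) =
      (M.map fun m => volume (block p₁ (i : ℕ) ∩ mSegX m)).sum :=
    measure_inter_list _ (measurableSet_block p₁ i) mSegX measurableSet_mSegX M hMd
  have hperm : ∀ m ∈ M, volume (block p₁ (i : ℕ) ∩ mSegX m) =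
      ∑ j : Fin p₂.length, volume (cellS p₁ p₂ m (i : ℕ) (j : ℕ)) := by
    intro m hmem
    obtain ⟨_, _, hy₀, _, hyt⟩ := hM.1 m hmem
    rw [← transX p₁ p₂ m i, rowSig p₁ p₂ hp₂ m hy₀ hyt i]
  have hfin : ∀ m ∈ M, volume (block p₁ (i : ℕ) ∩ mSegX m) ≠ ⊤ :=
    fun m _ => ne_top_of_le_ne_top (vol_block_ne_top p₁ i)
      (measure_mono Set.inter_subset_left)
  -- toReal computation
  have key : (volume ((Ico (0:ℝ) (eLen p₁) \ mEX M) ∩ block p₁ (i : ℕ))).toReal =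
      (p₁.get i).2 - ∑ j, tOf p₁ p₂ M (i, j) := by
    rw [hset, measure_diff Set.inter_subset_left
      ((measurableSet_block p₁ i).inter (measurableSet_mEX M)).nullMeasurableSet
      (ne_top_of_le_ne_top (vol_block_ne_top p₁ i) (measure_mono Set.inter_subset_left)),
      ENNReal.toReal_sub_of_le (measure_mono Set.inter_subset_left) (vol_block_ne_top p₁ i),
      vol_block p₁ i, ENNReal.toReal_ofReal (hp₁ _ (List.get_mem p₁ i)).le]
    congr 1
    rw [hmeas, toReal_list_sum _ (fun x hx => by
      obtain ⟨m, hmem, rfl⟩ := List.mem_map.1 hx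
      exact hfin m hmem)]
    have : ∀ m ∈ M, (volume (block p₁ (i : ℕ) ∩ mSegX m)).toReal =
        ∑ j : Fin p₂.length, sig p₁ p₂ m (i : ℕ) (j : ℕ) := by
      intro m hmem
      calc (volume (block p₁ (i : ℕ) ∩ mSegX m)).toReal
          = (∑ j : Fin p₂.length, volume (cellS p₁ p₂ m (i : ℕ) (j : ℕ))).toReal := by
            rw [hperm m hmem]
        _ = ∑ j : Fin p₂.length, (volume (cellS p₁ p₂ m (i : ℕ) (j : ℕ))).toReal :=
            ENNReal.toReal_sum (fun j _ => vol_cellS_ne_top p₁ p₂ m i j)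
        _ = ∑ j : Fin p₂.length, sig p₁ p₂ m (i : ℕ) (j : ℕ) := rfl
    rw [List.map_map]
    rw [List.map_congr_left (fun m hmem => by
      show (volume (block p₁ (i : ℕ) ∩ mSegX m)).toReal = _
      exact this m hmem)]
    rw [← finset_sum_list_sum]
    rfl
  rw [key]

lemma ins_integral (wins : α → ℝ) (p₁ p₂ : List (α × ℝ))
    (hp₁ : ∀ x ∈ p₁, 0 < x.2) (hp₂ : ∀ x ∈ p₂, 0 < x.2)
    (M : List (ℝ × ℝ × ℝ)) (hM : IsMatching (eLen p₁) (eLen p₂) M) :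
    (∫ y in Ico (0:ℝ) (eLen p₂) \ mEY M, wins (charAt p₂ y)) =
      ∑ j : Fin p₂.length,
        wins (p₂.get j).1 * ((p₂.get j).2 - ∑ i, tOf p₁ p₂ M (i, j)) := by
  have hEYm : MeasurableSet (mEY M) := measurableSet_mEY M
  have hAm : MeasurableSet (Ico (0:ℝ) (eLen p₂) \ mEY M) := measurableSet_Ico.diff hEYm
  have hAfin : volume (Ico (0:ℝ) (eLen p₂) \ mEY M) ≠ ⊤ :=
    ne_top_of_le_ne_top (by simp [Real.volume_Ico]) (measure_mono Set.diff_subset)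
  have h := setIntegral_piecewise (fun j : Fin p₂.length => block p₂ j)
    (fun j => measurableSet_block p₂ j)
    (fun i j h => block_disjoint p₂ (fun x hx => (hp₂ x hx).le) (Fin.val_injective.ne h))
    _ hAm hAfin
    (by
      intro y hy
      obtain ⟨j, hj, hbj⟩ := block_cover p₂ hp₂ hy.1
      exact Set.mem_iUnion.2 ⟨⟨j, hj⟩, hbj⟩)
    (fun y => wins (charAt p₂ y)) (fun j => wins (p₂.get j).1)
    (fun j y hy => by
      rw [charAt_eq p₂ hp₂ j j.2 hy.2])
  rw [h]
  refine Finset.sum_congr rfl fun j _ => ?_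
  congr 1
  have hsub : block p₂ (j : ℕ) ⊆ Ico 0 (eLen p₂) :=
    block_subset p₂ (fun x hx => (hp₂ x hx).le) j j.2
  have hset : (Ico (0:ℝ) (eLen p₂) \ mEY M) ∩ block p₂ (j : ℕ) =
      block p₂ (j : ℕ) \ (block p₂ (j : ℕ) ∩ mEY M) := by
    ext y
    simp only [Set.mem_diff, Set.mem_inter_iff, Set.mem_Ico]
    constructor
    · rintro ⟨⟨_, hnEY⟩, hB⟩
      exact ⟨hB, fun h => hnEY h.2⟩
    · rintro ⟨hB, hn⟩
      exact ⟨⟨hsub hB, fun hEY => hn ⟨hB, hEY⟩⟩, hB⟩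
  have hMd : M.Pairwise fun m m' => Disjoint (mSegY m) (mSegY m') :=
    hM.2.1.imp fun h => h.2
  have hmeas : volume (block p₂ (j : ℕ) ∩ mEY M) =
      (M.map fun m => volume (block p₂ (j : ℕ) ∩ mSegY m)).sum :=
    measure_inter_list _ (measurableSet_block p₂ j) mSegY measurableSet_mSegY M hMd
  have hperm : ∀ m ∈ M, volume (block p₂ (j : ℕ) ∩ mSegY m) =
      ∑ i : Fin p₁.length, volume (cellS p₁ p₂ m (i : ℕ) (j : ℕ)) := by
    intro m hmem
    obtain ⟨_, hx₀, _, hxt, _⟩ := hM.1 m hmem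
    rw [← transY p₁ p₂ m j, colSig p₁ p₂ hp₁ m hx₀ hxt j]
  have hfin : ∀ m ∈ M, volume (block p₂ (j : ℕ) ∩ mSegY m) ≠ ⊤ :=
    fun m _ => ne_top_of_le_ne_top (vol_block_ne_top p₂ j)
      (measure_mono Set.inter_subset_left)
  have key : (volume ((Ico (0:ℝ) (eLen p₂) \ mEY M) ∩ block p₂ (j : ℕ))).toReal =
      (p₂.get j).2 - ∑ i, tOf p₁ p₂ M (i, j) := by
    rw [hset, measure_diff Set.inter_subset_left
      ((measurableSet_block p₂ j).inter (measurableSet_mEY M)).nullMeasurableSet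
      (ne_top_of_le_ne_top (vol_block_ne_top p₂ j) (measure_mono Set.inter_subset_left)),
      ENNReal.toReal_sub_of_le (measure_mono Set.inter_subset_left) (vol_block_ne_top p₂ j),
      vol_block p₂ j, ENNReal.toReal_ofReal (hp₂ _ (List.get_mem p₂ j)).le]
    congr 1
    rw [hmeas, toReal_list_sum _ (fun x hx => by
      obtain ⟨m, hmem, rfl⟩ := List.mem_map.1 hx
      exact hfin m hmem)]
    have hkey : ∀ m ∈ M, (volume (block p₂ (j : ℕ) ∩ mSegY m)).toReal =
        ∑ i : Fin p₁.length, sig p₁ p₂ m (i : ℕ) (j : ℕ) := by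
      intro m hmem
      calc (volume (block p₂ (j : ℕ) ∩ mSegY m)).toReal
          = (∑ i : Fin p₁.length, volume (cellS p₁ p₂ m (i : ℕ) (j : ℕ))).toReal := by
            rw [hperm m hmem]
        _ = ∑ i : Fin p₁.length, (volume (cellS p₁ p₂ m (i : ℕ) (j : ℕ))).toReal :=
            ENNReal.toReal_sum (fun i _ => vol_cellS_ne_top p₁ p₂ m i j)
        _ = ∑ i : Fin p₁.length, sig p₁ p₂ m (i : ℕ) (j : ℕ) := rfl
    rw [List.map_map]
    rw [List.map_congr_left (fun m hmem => by
      show (volume (block p₂ (j : ℕ) ∩ mSegY m)).toReal = _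
      exact hkey m hmem)]
    rw [← finset_sum_list_sum]
    rfl
  rw [key]

lemma row_tOf (p₁ p₂ : List (α × ℝ)) (hp₂ : ∀ x ∈ p₂, 0 < x.2)
    (M : List (ℝ × ℝ × ℝ)) (hM : IsMatching (eLen p₁) (eLen p₂) M) (i : Fin p₁.length) :
    ∑ j, tOf p₁ p₂ M (i, j) = (volume (block p₁ (i : ℕ) ∩ mEX M)).toReal := by
  have hMd : M.Pairwise fun m m' => Disjoint (mSegX m) (mSegX m') :=
    hM.2.1.imp fun h => h.1
  have hfin : ∀ m ∈ M, volume (block p₁ (i : ℕ) ∩ mSegX m) ≠ ⊤ :=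
    fun m _ => ne_top_of_le_ne_top (vol_block_ne_top p₁ i)
      (measure_mono Set.inter_subset_left)
  have hmeas : volume (block p₁ (i : ℕ) ∩ mEX M) =
      (M.map fun m => volume (block p₁ (i : ℕ) ∩ mSegX m)).sum :=
    measure_inter_list _ (measurableSet_block p₁ i) mSegX measurableSet_mSegX M hMd
  rw [hmeas,
    toReal_list_sum _ (fun x hx => by
      obtain ⟨m, hmem, rfl⟩ := List.mem_map.1 hx
      exact hfin m hmem), List.map_map]
  have hkey : ∀ m ∈ M, (volume (block p₁ (i : ℕ) ∩ mSegX m)).toReal =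
      ∑ j : Fin p₂.length, sig p₁ p₂ m (i : ℕ) (j : ℕ) := by
    intro m hmem
    obtain ⟨_, _, hy₀, _, hyt⟩ := hM.1 m hmem
    calc (volume (block p₁ (i : ℕ) ∩ mSegX m)).toReal
        = (∑ j : Fin p₂.length, volume (cellS p₁ p₂ m (i : ℕ) (j : ℕ))).toReal := by
          rw [← transX p₁ p₂ m i, rowSig p₁ p₂ hp₂ m hy₀ hyt i]
      _ = ∑ j : Fin p₂.length, (volume (cellS p₁ p₂ m (i : ℕ) (j : ℕ))).toReal :=
          ENNReal.toReal_sum (fun j _ => vol_cellS_ne_top p₁ p₂ m i j)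
      _ = ∑ j : Fin p₂.length, sig p₁ p₂ m (i : ℕ) (j : ℕ) := rfl
  rw [List.map_congr_left (fun m hmem => by
    show (volume (block p₁ (i : ℕ) ∩ mSegX m)).toReal = _
    exact hkey m hmem)]
  rw [← finset_sum_list_sum]
  rfl

lemma col_tOf (p₁ p₂ : List (α × ℝ)) (hp₁ : ∀ x ∈ p₁, 0 < x.2)
    (M : List (ℝ × ℝ × ℝ)) (hM : IsMatching (eLen p₁) (eLen p₂) M) (j : Fin p₂.length) :
    ∑ i, tOf p₁ p₂ M (i, j) = (volume (block p₂ (j : ℕ) ∩ mEY M)).toReal := by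
  have hMd : M.Pairwise fun m m' => Disjoint (mSegY m) (mSegY m') :=
    hM.2.1.imp fun h => h.2
  have hfin : ∀ m ∈ M, volume (block p₂ (j : ℕ) ∩ mSegY m) ≠ ⊤ :=
    fun m _ => ne_top_of_le_ne_top (vol_block_ne_top p₂ j)
      (measure_mono Set.inter_subset_left)
  have hmeas : volume (block p₂ (j : ℕ) ∩ mEY M) =
      (M.map fun m => volume (block p₂ (j : ℕ) ∩ mSegY m)).sum :=
    measure_inter_list _ (measurableSet_block p₂ j) mSegY measurableSet_mSegY M hMd
  rw [hmeas,
    toReal_list_sum _ (fun x hx => by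
      obtain ⟨m, hmem, rfl⟩ := List.mem_map.1 hx
      exact hfin m hmem), List.map_map]
  have hkey : ∀ m ∈ M, (volume (block p₂ (j : ℕ) ∩ mSegY m)).toReal =
      ∑ i : Fin p₁.length, sig p₁ p₂ m (i : ℕ) (j : ℕ) := by
    intro m hmem
    obtain ⟨_, hx₀, _, hxt, _⟩ := hM.1 m hmem
    calc (volume (block p₂ (j : ℕ) ∩ mSegY m)).toReal
        = (∑ i : Fin p₁.length, volume (cellS p₁ p₂ m (i : ℕ) (j : ℕ))).toReal := by
          rw [← transY p₁ p₂ m j, colSig p₁ p₂ hp₁ m hx₀ hxt j]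
      _ = ∑ i : Fin p₁.length, (volume (cellS p₁ p₂ m (i : ℕ) (j : ℕ))).toReal :=
          ENNReal.toReal_sum (fun i _ => vol_cellS_ne_top p₁ p₂ m i j)
      _ = ∑ i : Fin p₁.length, sig p₁ p₂ m (i : ℕ) (j : ℕ) := rfl
  rw [List.map_congr_left (fun m hmem => by
    show (volume (block p₂ (j : ℕ) ∩ mSegY m)).toReal = _
    exact hkey m hmem)]
  rw [← finset_sum_list_sum]
  rfl

theorem feas_tOf (p₁ p₂ : List (α × ℝ)) (hp₁ : ∀ x ∈ p₁, 0 < x.2)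
    (hp₂ : ∀ x ∈ p₂, 0 < x.2) (M : List (ℝ × ℝ × ℝ))
    (hM : IsMatching (eLen p₁) (eLen p₂) M) : Feas p₁ p₂ (tOf p₁ p₂ M) := by
  refine ⟨?_, ?_, ?_, ?_⟩
  · intro ij
    apply List.sum_nonneg
    intro x hx
    obtain ⟨m, _, rfl⟩ := List.mem_map.1 hx
    exact sig_nonneg p₁ p₂ m ij.1 ij.2
  · intro i
    rw [row_tOf p₁ p₂ hp₂ M hM i]
    have h1 : volume (block p₁ (i : ℕ) ∩ mEX M) ≤ volume (block p₁ (i : ℕ)) :=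
      measure_mono Set.inter_subset_left
    have := ENNReal.toReal_mono (vol_block_ne_top p₁ i) h1
    rw [vol_block p₁ i, ENNReal.toReal_ofReal (hp₁ _ (List.get_mem p₁ i)).le] at this
    exact this
  · intro j
    rw [col_tOf p₁ p₂ hp₁ M hM j]
    have h1 : volume (block p₂ (j : ℕ) ∩ mEY M) ≤ volume (block p₂ (j : ℕ)) :=
      measure_mono Set.inter_subset_left
    have := ENNReal.toReal_mono (vol_block_ne_top p₂ j) h1
    rw [vol_block p₂ j, ENNReal.toReal_ofReal (hp₂ _ (List.get_mem p₂ j)).le] at this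
    exact this
  · intro i i' j j' hii hjj
    by_contra hcon
    push_neg at hcon
    obtain ⟨h1, h2⟩ := hcon
    -- extract witnesses
    have hex : ∀ (i : Fin p₁.length) (j : Fin p₂.length), tOf p₁ p₂ M (i, j) ≠ 0 →
        ∃ m ∈ M, ∃ s, s ∈ cellS p₁ p₂ m (i : ℕ) (j : ℕ) := by
      intro i j hne
      have : ∃ m ∈ M, sig p₁ p₂ m (i : ℕ) (j : ℕ) ≠ 0 := by
        by_contra hall
        push_neg at hall
        apply hne
        apply List.sum_eq_zero
        intro x hx
        obtain ⟨m, hmem, rfl⟩ := List.mem_map.1 hx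
        exact hall m hmem
      obtain ⟨m, hmem, hsig⟩ := this
      have hvol : volume (cellS p₁ p₂ m (i : ℕ) (j : ℕ)) ≠ 0 := by
        intro hv
        apply hsig
        rw [sig, hv]
        simp
      obtain ⟨s, hs⟩ := nonempty_of_measure_ne_zero hvol
      exact ⟨m, hmem, s, hs⟩
    obtain ⟨m, hm, s, hs⟩ := hex i j h1
    obtain ⟨m', hm', s', hs'⟩ := hex i' j' h2
    obtain ⟨⟨hs0, hst⟩, hbx⟩ := hs.1
    have hby := hs.2
    obtain ⟨⟨hs0', hst'⟩, hbx'⟩ := hs'.1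
    have hby' := hs'.2
    rw [Set.mem_preimage, mem_block] at hbx hby hbx' hby'
    -- x-coordinates are ordered
    have hxlt : m.1 + s < m'.1 + s' := by
      have h3 : m.1 + s < pref p₁ ((i : ℕ) + 1) := hbx.2
      have h4 : pref p₁ ((i : ℕ) + 1) ≤ pref p₁ (i' : ℕ) :=
        pref_mono p₁ (fun x hx => (hp₁ x hx).le) hii
      have h5 : pref p₁ (i' : ℕ) ≤ m'.1 + s' := hbx'.1
      linarith
    have hyle : m.2.1 + s ≤ m'.2.1 + s' :=
      hM.2.2 m hm m' hm' s s' hs0 hst hs0' hst' hxlt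
    have hygt : m'.2.1 + s' < m.2.1 + s := by
      have h3 : m'.2.1 + s' < pref p₂ ((j' : ℕ) + 1) := hby'.2
      have h4 : pref p₂ ((j' : ℕ) + 1) ≤ pref p₂ (j : ℕ) :=
        pref_mono p₂ (fun x hx => (hp₂ x hx).le) hjj
      have h5 : pref p₂ (j : ℕ) ≤ m.2.1 + s := hby.1
      linarith
    linarith

theorem mCost_eq_costT (wdel wins : α → ℝ) (wsub : α → α → ℝ) (p₁ p₂ : List (α × ℝ))
    (hp₁ : ∀ x ∈ p₁, 0 < x.2) (hp₂ : ∀ x ∈ p₂, 0 < x.2)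
    (M : List (ℝ × ℝ × ℝ)) (hM : IsMatching (eLen p₁) (eLen p₂) M) :
    mCost wdel wins wsub p₁ p₂ M = costT wdel wins wsub p₁ p₂ (tOf p₁ p₂ M) := by
  rw [mCost, costT]
  congr 1
  · congr 1
    · exact del_integral wdel p₁ p₂ hp₁ hp₂ M hM
    · exact ins_integral wins p₁ p₂ hp₁ hp₂ M hM
  · rw [List.map_congr_left (fun m hmem => sub_integral wsub p₁ p₂ hp₁ hp₂ m (hM.1 m hmem))]
    rw [← finset_sum_list_sum]
    refine Finset.sum_congr rfl fun ij _ => ?_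
    rw [List.sum_map_mul_left]
    rw [mul_comm]
    rfl

omit [Inhabited α] in
lemma finset_toList_map_sum {γ β : Type*} [AddCommMonoid β] (s : Finset γ) (f : γ → β) :
    (s.toList.map f).sum = ∑ x ∈ s, f x := by
  rw [← Multiset.sum_coe, ← Multiset.map_coe]
  simp [Finset.toList]

/-- start positions for the segment realizing the `(i,j)` entry of a plan -/
def segOf (p₁ p₂ : List (α × ℝ)) (t : Fin p₁.length × Fin p₂.length → ℝ)
    (ij : Fin p₁.length × Fin p₂.length) : ℝ × ℝ × ℝ :=
  (pref p₁ (ij.1 : ℕ) + ∑ j' ∈ Finset.univ.filter (fun j' => j' < ij.2), t (ij.1, j'),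
   pref p₂ (ij.2 : ℕ) + ∑ i' ∈ Finset.univ.filter (fun i' => i' < ij.1), t (i', ij.2),
   t ij)

def MOf (p₁ p₂ : List (α × ℝ)) (t : Fin p₁.length × Fin p₂.length → ℝ) :
    List (ℝ × ℝ × ℝ) :=
  ((Finset.univ.filter fun ij => 0 < t ij).toList).map (segOf p₁ p₂ t)

section Constr

variable (p₁ p₂ : List (α × ℝ)) (t : Fin p₁.length × Fin p₂.length → ℝ)

omit [Inhabited α] in
lemma psum_row_nonneg (hfeas : Feas p₁ p₂ t) (ij : Fin p₁.length × Fin p₂.length) :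
    0 ≤ ∑ j' ∈ Finset.univ.filter (fun j' => j' < ij.2), t (ij.1, j') :=
  Finset.sum_nonneg fun j' _ => hfeas.1 _

omit [Inhabited α] in
lemma psum_col_nonneg (hfeas : Feas p₁ p₂ t) (ij : Fin p₁.length × Fin p₂.length) :
    0 ≤ ∑ i' ∈ Finset.univ.filter (fun i' => i' < ij.1), t (i', ij.2) :=
  Finset.sum_nonneg fun i' _ => hfeas.1 _

omit [Inhabited α] in
lemma psum_row_le (hfeas : Feas p₁ p₂ t) (i : Fin p₁.length) {j l : Fin p₂.length}
    (hjl : j < l) :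
    (∑ j' ∈ Finset.univ.filter (fun j' => j' < j), t (i, j')) + t (i, j) ≤
      ∑ j' ∈ Finset.univ.filter (fun j' => j' < l), t (i, j') := by
  have hnot : j ∉ Finset.univ.filter (fun j' => j' < j) := by simp
  have heq : (∑ j' ∈ Finset.univ.filter (fun j' => j' < j), t (i, j')) + t (i, j) =
      ∑ j' ∈ insert j (Finset.univ.filter (fun j' => j' < j)), t (i, j') := by
    rw [Finset.sum_insert hnot, add_comm]
  rw [heq]
  apply Finset.sum_le_sum_of_subset_of_nonneg
  · intro x hx
    simp only [Finset.mem_insert, Finset.mem_filter, Finset.mem_univ, true_and] at hx ⊢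
    rcases hx with rfl | hx
    · exact hjl
    · exact lt_trans hx hjl
  · exact fun x _ _ => hfeas.1 _

omit [Inhabited α] in
lemma psum_row_total (hfeas : Feas p₁ p₂ t) (ij : Fin p₁.length × Fin p₂.length) :
    (∑ j' ∈ Finset.univ.filter (fun j' => j' < ij.2), t (ij.1, j')) + t ij ≤
      (p₁.get ij.1).2 := by
  have hnot : ij.2 ∉ Finset.univ.filter (fun j' => j' < ij.2) := by simp
  have h1 : (∑ j' ∈ Finset.univ.filter (fun j' => j' < ij.2), t (ij.1, j')) + t (ij.1, ij.2) ≤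
      ∑ j', t (ij.1, j') := by
    have heq : (∑ j' ∈ Finset.univ.filter (fun j' => j' < ij.2), t (ij.1, j')) + t (ij.1, ij.2) =
        ∑ j' ∈ insert ij.2 (Finset.univ.filter (fun j' => j' < ij.2)), t (ij.1, j') := by
      rw [Finset.sum_insert hnot, add_comm]
    rw [heq]
    apply Finset.sum_le_sum_of_subset_of_nonneg (Finset.subset_univ _)
    exact fun x _ _ => hfeas.1 _
  calc (∑ j' ∈ Finset.univ.filter (fun j' => j' < ij.2), t (ij.1, j')) + t ij ≤
      ∑ j', t (ij.1, j') := h1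
    _ ≤ (p₁.get ij.1).2 := hfeas.2.1 ij.1

omit [Inhabited α] in
lemma psum_col_le (hfeas : Feas p₁ p₂ t) (j : Fin p₂.length) {i k : Fin p₁.length}
    (hik : i < k) :
    (∑ i' ∈ Finset.univ.filter (fun i' => i' < i), t (i', j)) + t (i, j) ≤
      ∑ i' ∈ Finset.univ.filter (fun i' => i' < k), t (i', j) := by
  have hnot : i ∉ Finset.univ.filter (fun i' => i' < i) := by simp
  have heq : (∑ i' ∈ Finset.univ.filter (fun i' => i' < i), t (i', j)) + t (i, j) =
      ∑ i' ∈ insert i (Finset.univ.filter (fun i' => i' < i)), t (i', j) := by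
    rw [Finset.sum_insert hnot, add_comm]
  rw [heq]
  apply Finset.sum_le_sum_of_subset_of_nonneg
  · intro x hx
    simp only [Finset.mem_insert, Finset.mem_filter, Finset.mem_univ, true_and] at hx ⊢
    rcases hx with rfl | hx
    · exact hik
    · exact lt_trans hx hik
  · exact fun x _ _ => hfeas.1 _

omit [Inhabited α] in
lemma psum_col_total (hfeas : Feas p₁ p₂ t) (ij : Fin p₁.length × Fin p₂.length) :
    (∑ i' ∈ Finset.univ.filter (fun i' => i' < ij.1), t (i', ij.2)) + t ij ≤
      (p₂.get ij.2).2 := by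
  have hnot : ij.1 ∉ Finset.univ.filter (fun i' => i' < ij.1) := by simp
  have h1 : (∑ i' ∈ Finset.univ.filter (fun i' => i' < ij.1), t (i', ij.2)) + t (ij.1, ij.2) ≤
      ∑ i', t (i', ij.2) := by
    have heq : (∑ i' ∈ Finset.univ.filter (fun i' => i' < ij.1), t (i', ij.2)) + t (ij.1, ij.2) =
        ∑ i' ∈ insert ij.1 (Finset.univ.filter (fun i' => i' < ij.1)), t (i', ij.2) := by
      rw [Finset.sum_insert hnot, add_comm]
    rw [heq]
    apply Finset.sum_le_sum_of_subset_of_nonneg (Finset.subset_univ _)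
    exact fun x _ _ => hfeas.1 _
  calc (∑ i' ∈ Finset.univ.filter (fun i' => i' < ij.1), t (i', ij.2)) + t ij ≤
      ∑ i', t (i', ij.2) := h1
    _ ≤ (p₂.get ij.2).2 := hfeas.2.2.1 ij.2

omit [Inhabited α] in
lemma segX_subset (hp₁ : ∀ x ∈ p₁, 0 < x.2) (hfeas : Feas p₁ p₂ t)
    (ij : Fin p₁.length × Fin p₂.length) :
    mSegX (segOf p₁ p₂ t ij) ⊆ block p₁ (ij.1 : ℕ) := by
  intro x hx
  obtain ⟨hx1, hx2⟩ := hx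
  rw [mem_block]
  constructor
  · calc pref p₁ (ij.1 : ℕ) ≤ (segOf p₁ p₂ t ij).1 := le_add_of_nonneg_right (psum_row_nonneg p₁ p₂ t hfeas ij)
      _ ≤ x := hx1
  · rw [pref_succ p₁ ij.1 ij.1.2]
    have := psum_row_total p₁ p₂ t hfeas ij
    have h2 : (segOf p₁ p₂ t ij).1 + (segOf p₁ p₂ t ij).2.2 ≤
        pref p₁ (ij.1 : ℕ) + (p₁.get ij.1).2 := by
      show pref p₁ (ij.1 : ℕ) + _ + t ij ≤ _
      linarith
    calc x < (segOf p₁ p₂ t ij).1 + (segOf p₁ p₂ t ij).2.2 := hx2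
      _ ≤ pref p₁ (ij.1 : ℕ) + (p₁.get ⟨(ij.1 : ℕ), ij.1.2⟩).2 := by
        rw [Fin.eta]; exact h2
      _ = _ := rfl

omit [Inhabited α] in
lemma segY_subset (hp₂ : ∀ x ∈ p₂, 0 < x.2) (hfeas : Feas p₁ p₂ t)
    (ij : Fin p₁.length × Fin p₂.length) :
    mSegY (segOf p₁ p₂ t ij) ⊆ block p₂ (ij.2 : ℕ) := by
  intro y hy
  obtain ⟨hy1, hy2⟩ := hy
  rw [mem_block]
  constructor
  · calc pref p₂ (ij.2 : ℕ) ≤ (segOf p₁ p₂ t ij).2.1 := le_add_of_nonneg_right (psum_col_nonneg p₁ p₂ t hfeas ij)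
      _ ≤ y := hy1
  · rw [pref_succ p₂ ij.2 ij.2.2]
    have := psum_col_total p₁ p₂ t hfeas ij
    have h2 : (segOf p₁ p₂ t ij).2.1 + (segOf p₁ p₂ t ij).2.2 ≤
        pref p₂ (ij.2 : ℕ) + (p₂.get ij.2).2 := by
      show pref p₂ (ij.2 : ℕ) + _ + t ij ≤ _
      linarith
    calc y < (segOf p₁ p₂ t ij).2.1 + (segOf p₁ p₂ t ij).2.2 := hy2
      _ ≤ pref p₂ (ij.2 : ℕ) + (p₂.get ⟨(ij.2 : ℕ), ij.2.2⟩).2 := by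
        rw [Fin.eta]; exact h2
      _ = _ := rfl

end Constr

section Constr2
variable (p₁ p₂ : List (α × ℝ)) (t : Fin p₁.length × Fin p₂.length → ℝ)

omit [Inhabited α] in
lemma mem_MOf {m : ℝ × ℝ × ℝ} :
    m ∈ MOf p₁ p₂ t ↔ ∃ ij, 0 < t ij ∧ m = segOf p₁ p₂ t ij := by
  simp only [MOf, List.mem_map, Finset.mem_toList, Finset.mem_filter, Finset.mem_univ, true_and]
  constructor
  · rintro ⟨ij, h1, rfl⟩; exact ⟨ij, h1, rfl⟩
  · rintro ⟨ij, h1, rfl⟩; exact ⟨ij, h1, rfl⟩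

omit [Inhabited α] in
lemma segX_start (ij : Fin p₁.length × Fin p₂.length) (hfeas : Feas p₁ p₂ t) :
    pref p₁ (ij.1 : ℕ) ≤ (segOf p₁ p₂ t ij).1 :=
  le_add_of_nonneg_right (psum_row_nonneg p₁ p₂ t hfeas ij)

omit [Inhabited α] in
lemma segX_end (ij : Fin p₁.length × Fin p₂.length) (hfeas : Feas p₁ p₂ t) :
    (segOf p₁ p₂ t ij).1 + (segOf p₁ p₂ t ij).2.2 ≤ pref p₁ ((ij.1 : ℕ) + 1) := by
  rw [pref_succ p₁ ij.1 ij.1.2, Fin.eta]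
  have := psum_row_total p₁ p₂ t hfeas ij
  show pref p₁ (ij.1 : ℕ) + _ + t ij ≤ _
  linarith

omit [Inhabited α] in
lemma segY_start (ij : Fin p₁.length × Fin p₂.length) (hfeas : Feas p₁ p₂ t) :
    pref p₂ (ij.2 : ℕ) ≤ (segOf p₁ p₂ t ij).2.1 :=
  le_add_of_nonneg_right (psum_col_nonneg p₁ p₂ t hfeas ij)

omit [Inhabited α] in
lemma segY_end (ij : Fin p₁.length × Fin p₂.length) (hfeas : Feas p₁ p₂ t) :
    (segOf p₁ p₂ t ij).2.1 + (segOf p₁ p₂ t ij).2.2 ≤ pref p₂ ((ij.2 : ℕ) + 1) := by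
  rw [pref_succ p₂ ij.2 ij.2.2, Fin.eta]
  have := psum_col_total p₁ p₂ t hfeas ij
  show pref p₂ (ij.2 : ℕ) + _ + t ij ≤ _
  linarith

omit [Inhabited α] in
lemma isMatching_MOf (hp₁ : ∀ x ∈ p₁, 0 < x.2) (hp₂ : ∀ x ∈ p₂, 0 < x.2)
    (hfeas : Feas p₁ p₂ t) : IsMatching (eLen p₁) (eLen p₂) (MOf p₁ p₂ t) := by
  have hp₁' : ∀ x ∈ p₁, 0 ≤ x.2 := fun x hx => (hp₁ x hx).le
  have hp₂' : ∀ x ∈ p₂, 0 ≤ x.2 := fun x hx => (hp₂ x hx).le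
  refine ⟨?_, ?_, ?_⟩
  · intro m hm
    obtain ⟨ij, hij, rfl⟩ := (mem_MOf p₁ p₂ t).1 hm
    refine ⟨hij, ?_, ?_, ?_, ?_⟩
    · exact add_nonneg (pref_nonneg p₁ hp₁' _) (psum_row_nonneg p₁ p₂ t hfeas ij)
    · exact add_nonneg (pref_nonneg p₂ hp₂' _) (psum_col_nonneg p₁ p₂ t hfeas ij)
    · calc (segOf p₁ p₂ t ij).1 + (segOf p₁ p₂ t ij).2.2 ≤ pref p₁ ((ij.1 : ℕ) + 1) :=
          segX_end p₁ p₂ t ij hfeas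
        _ ≤ pref p₁ p₁.length := pref_mono p₁ hp₁' ij.1.2
        _ = eLen p₁ := pref_length p₁
    · calc (segOf p₁ p₂ t ij).2.1 + (segOf p₁ p₂ t ij).2.2 ≤ pref p₂ ((ij.2 : ℕ) + 1) :=
          segY_end p₁ p₂ t ij hfeas
        _ ≤ pref p₂ p₂.length := pref_mono p₂ hp₂' ij.2.2
        _ = eLen p₂ := pref_length p₂
  · rw [MOf, List.pairwise_map]
    have hnd : ((Finset.univ.filter fun ij => 0 < t ij).toList).Pairwise (· ≠ ·) :=
      Finset.nodup_toList _
    refine hnd.imp_of_mem ?_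
    intro ij kl hij hkl hne
    rw [Finset.mem_toList, Finset.mem_filter] at hij hkl
    have htij := hij.2
    have htkl := hkl.2
    constructor
    · -- X projections disjoint
      rcases eq_or_ne ij.1 kl.1 with h1 | h1
      · have h2 : ij.2 ≠ kl.2 := fun h2 => hne (Prod.ext h1 h2)
        have key : ∀ (a b : Fin p₁.length × Fin p₂.length), 0 < t a → 0 < t b →
            a.1 = b.1 → a.2 < b.2 → Disjoint (mSegX (segOf p₁ p₂ t a)) (mSegX (segOf p₁ p₂ t b)) := by
          rintro ⟨i, j⟩ ⟨k, l⟩ hta htb hab hlt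
          dsimp only at hab hlt
          subst hab
          rw [mSegX, mSegX, Set.Ico_disjoint_Ico]
          have hle := psum_row_le p₁ p₂ t hfeas i hlt
          have hthis : (segOf p₁ p₂ t (i, j)).1 + (segOf p₁ p₂ t (i, j)).2.2 ≤
              (segOf p₁ p₂ t (i, l)).1 := by
            show pref p₁ (i : ℕ) + _ + t (i, j) ≤ pref p₁ (i : ℕ) + _
            dsimp only at hle ⊢
            linarith
          calc min ((segOf p₁ p₂ t (i, j)).1 + (segOf p₁ p₂ t (i, j)).2.2)
                ((segOf p₁ p₂ t (i, l)).1 + (segOf p₁ p₂ t (i, l)).2.2)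
              ≤ (segOf p₁ p₂ t (i, j)).1 + (segOf p₁ p₂ t (i, j)).2.2 := min_le_left _ _
            _ ≤ (segOf p₁ p₂ t (i, l)).1 := hthis
            _ ≤ max (segOf p₁ p₂ t (i, j)).1 (segOf p₁ p₂ t (i, l)).1 := le_max_right _ _
        rcases h2.lt_or_gt with hlt | hlt
        · exact key ij kl htij htkl h1 hlt
        · exact (key kl ij htkl htij h1.symm hlt).symm
      · exact (block_disjoint p₁ hp₁' (Fin.val_injective.ne h1)).mono
          (segX_subset p₁ p₂ t hp₁ hfeas ij) (segX_subset p₁ p₂ t hp₁ hfeas kl)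
    · -- Y projections disjoint
      rcases eq_or_ne ij.2 kl.2 with h2 | h2
      · have h1 : ij.1 ≠ kl.1 := fun h1 => hne (Prod.ext h1 h2)
        have key : ∀ (a b : Fin p₁.length × Fin p₂.length), 0 < t a → 0 < t b →
            a.2 = b.2 → a.1 < b.1 → Disjoint (mSegY (segOf p₁ p₂ t a)) (mSegY (segOf p₁ p₂ t b)) := by
          rintro ⟨i, j⟩ ⟨k, l⟩ hta htb hab hlt
          dsimp only at hab hlt
          subst hab
          rw [mSegY, mSegY, Set.Ico_disjoint_Ico]
          have hle := psum_col_le p₁ p₂ t hfeas j hlt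
          have hthis : (segOf p₁ p₂ t (i, j)).2.1 + (segOf p₁ p₂ t (i, j)).2.2 ≤
              (segOf p₁ p₂ t (k, j)).2.1 := by
            show pref p₂ (j : ℕ) + _ + t (i, j) ≤ pref p₂ (j : ℕ) + _
            dsimp only at hle ⊢
            linarith
          calc min ((segOf p₁ p₂ t (i, j)).2.1 + (segOf p₁ p₂ t (i, j)).2.2)
                ((segOf p₁ p₂ t (k, j)).2.1 + (segOf p₁ p₂ t (k, j)).2.2)
              ≤ (segOf p₁ p₂ t (i, j)).2.1 + (segOf p₁ p₂ t (i, j)).2.2 := min_le_left _ _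
            _ ≤ (segOf p₁ p₂ t (k, j)).2.1 := hthis
            _ ≤ max (segOf p₁ p₂ t (i, j)).2.1 (segOf p₁ p₂ t (k, j)).2.1 := le_max_right _ _
        rcases h1.lt_or_gt with hlt | hlt
        · exact key ij kl htij htkl h2 hlt
        · exact (key kl ij htkl htij h2.symm hlt).symm
      · exact (block_disjoint p₂ hp₂' (Fin.val_injective.ne h2)).mono
          (segY_subset p₁ p₂ t hp₂ hfeas ij) (segY_subset p₁ p₂ t hp₂ hfeas kl)
  · -- monotonicity
    intro m hm m' hm' s s' hs0 hst hs0' hst' hxlt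
    obtain ⟨ij, htij, rfl⟩ := (mem_MOf p₁ p₂ t).1 hm
    obtain ⟨kl, htkl, rfl⟩ := (mem_MOf p₁ p₂ t).1 hm'
    have fx1 := segX_start p₁ p₂ t ij hfeas
    have fx2 := segX_end p₁ p₂ t ij hfeas
    have fy1 := segY_start p₁ p₂ t ij hfeas
    have fy2 := segY_end p₁ p₂ t ij hfeas
    have gx1 := segX_start p₁ p₂ t kl hfeas
    have gx2 := segX_end p₁ p₂ t kl hfeas
    have gy1 := segY_start p₁ p₂ t kl hfeas
    have gy2 := segY_end p₁ p₂ t kl hfeas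
    have hts : (segOf p₁ p₂ t ij).2.2 = t ij := rfl
    have hts' : (segOf p₁ p₂ t kl).2.2 = t kl := rfl
    rw [hts] at hst fx2 fy2
    rw [hts'] at hst' gx2 gy2
    rcases lt_trichotomy ((ij.1 : ℕ)) ((kl.1 : ℕ)) with hik | hik | hik
    · -- i < k
      rcases lt_trichotomy ((ij.2 : ℕ)) ((kl.2 : ℕ)) with hjl | hjl | hjl
      · -- j < l : different y-blocks
        have h3 : pref p₂ ((ij.2 : ℕ) + 1) ≤ pref p₂ (kl.2 : ℕ) := pref_mono p₂ hp₂' hjl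
        linarith
      · -- j = l : packing in the y-block
        have hj : ij.2 = kl.2 := Fin.ext hjl
        have hle := psum_col_le p₁ p₂ t hfeas ij.2
          (show ij.1 < kl.1 from Fin.lt_def.2 hik)
        have hpk : (segOf p₁ p₂ t ij).2.1 + t ij ≤ (segOf p₁ p₂ t kl).2.1 := by
          show pref p₂ (ij.2 : ℕ) + _ + t ij ≤ pref p₂ (kl.2 : ℕ) + _
          rw [← hj]
          have ha : t ij = t (ij.1, ij.2) := by rw [Prod.mk.eta]
          rw [ha]
          linarith
        linarith
      · -- l < j : excluded by the chain condition
        exfalso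
        rcases hfeas.2.2.2 ij.1 kl.1 ij.2 kl.2 hik hjl with h0 | h0
        · rw [Prod.mk.eta] at h0; exact htij.ne' h0
        · rw [Prod.mk.eta] at h0; exact htkl.ne' h0
    · -- i = k
      have hi : ij.1 = kl.1 := Fin.ext hik
      rcases lt_trichotomy ((ij.2 : ℕ)) ((kl.2 : ℕ)) with hjl | hjl | hjl
      · have h3 : pref p₂ ((ij.2 : ℕ) + 1) ≤ pref p₂ (kl.2 : ℕ) := pref_mono p₂ hp₂' hjl
        linarith
      · -- same cell: same segment
        have hj : ij.2 = kl.2 := Fin.ext hjl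
        have : ij = kl := Prod.ext hi hj
        subst this
        linarith
      · -- l < j : x-order impossible
        exfalso
        have hle := psum_row_le p₁ p₂ t hfeas kl.1
          (show kl.2 < ij.2 from Fin.lt_def.2 hjl)
        have hpk : (segOf p₁ p₂ t kl).1 + t kl ≤ (segOf p₁ p₂ t ij).1 := by
          show pref p₁ (kl.1 : ℕ) + _ + t kl ≤ pref p₁ (ij.1 : ℕ) + _
          rw [hi]
          have ha : t kl = t (kl.1, kl.2) := by rw [Prod.mk.eta]
          rw [ha]
          linarith
        linarith
    · -- k < i : x-order impossible
      exfalso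
      have h3 : pref p₁ ((kl.1 : ℕ) + 1) ≤ pref p₁ (ij.1 : ℕ) := pref_mono p₁ hp₁' hik
      linarith

end Constr2

section Constr3
variable (p₁ p₂ : List (α × ℝ)) (t : Fin p₁.length × Fin p₂.length → ℝ)

omit [Inhabited α] in
lemma sig_segOf (hp₁ : ∀ x ∈ p₁, 0 < x.2) (hp₂ : ∀ x ∈ p₂, 0 < x.2)
    (hfeas : Feas p₁ p₂ t) (ij kl : Fin p₁.length × Fin p₂.length) (hij : 0 < t ij) :
    sig p₁ p₂ (segOf p₁ p₂ t ij) (kl.1 : ℕ) (kl.2 : ℕ) = if ij = kl then t ij else 0 := by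
  have hmemX : ∀ s ∈ Ico (0:ℝ) (t ij), (segOf p₁ p₂ t ij).1 + s ∈ block p₁ (ij.1 : ℕ) := by
    intro s hs
    apply segX_subset p₁ p₂ t hp₁ hfeas ij
    have h2 : (segOf p₁ p₂ t ij).1 + s < (segOf p₁ p₂ t ij).1 + (segOf p₁ p₂ t ij).2.2 :=
      (add_lt_add_iff_left _).2 hs.2
    exact ⟨le_add_of_nonneg_right hs.1, h2⟩
  have hmemY : ∀ s ∈ Ico (0:ℝ) (t ij), (segOf p₁ p₂ t ij).2.1 + s ∈ block p₂ (ij.2 : ℕ) := by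
    intro s hs
    apply segY_subset p₁ p₂ t hp₂ hfeas ij
    have h2 : (segOf p₁ p₂ t ij).2.1 + s < (segOf p₁ p₂ t ij).2.1 + (segOf p₁ p₂ t ij).2.2 :=
      (add_lt_add_iff_left _).2 hs.2
    exact ⟨le_add_of_nonneg_right hs.1, h2⟩
  by_cases h : ij = kl
  · subst h
    rw [if_pos rfl]
    have hset : cellS p₁ p₂ (segOf p₁ p₂ t ij) (ij.1 : ℕ) (ij.2 : ℕ) = Ico (0:ℝ) (t ij) := by
      apply Set.Subset.antisymm
      · exact fun s hs => hs.1.1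
      · intro s hs
        exact ⟨⟨hs, hmemX s hs⟩, hmemY s hs⟩
    rw [sig, hset, Real.volume_Ico, sub_zero, ENNReal.toReal_ofReal hij.le]
  · rw [if_neg h]
    have hset : cellS p₁ p₂ (segOf p₁ p₂ t ij) (kl.1 : ℕ) (kl.2 : ℕ) = ∅ := by
      rw [Set.eq_empty_iff_forall_notMem]
      rintro s ⟨⟨hs, hbx⟩, hby⟩
      rw [Set.mem_preimage] at hbx hby
      have h1 : ij.1 = kl.1 := by
        by_contra hne
        exact Set.disjoint_left.1 (block_disjoint p₁ (fun x hx => (hp₁ x hx).le)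
          (Fin.val_injective.ne hne)) (hmemX s hs) hbx
      have h2 : ij.2 = kl.2 := by
        by_contra hne
        exact Set.disjoint_left.1 (block_disjoint p₂ (fun x hx => (hp₂ x hx).le)
          (Fin.val_injective.ne hne)) (hmemY s hs) hby
      exact h (Prod.ext h1 h2)
    rw [sig, hset]
    simp

omit [Inhabited α] in
lemma tOf_MOf (hp₁ : ∀ x ∈ p₁, 0 < x.2) (hp₂ : ∀ x ∈ p₂, 0 < x.2)
    (hfeas : Feas p₁ p₂ t) : tOf p₁ p₂ (MOf p₁ p₂ t) = t := by
  funext kl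
  rw [tOf, MOf, List.map_map]
  have h1 : ((Finset.univ.filter fun ij => 0 < t ij).toList.map
      ((fun m => sig p₁ p₂ m (kl.1 : ℕ) (kl.2 : ℕ)) ∘ segOf p₁ p₂ t)).sum =
      ∑ ij ∈ Finset.univ.filter fun ij => 0 < t ij,
        sig p₁ p₂ (segOf p₁ p₂ t ij) (kl.1 : ℕ) (kl.2 : ℕ) :=
    finset_toList_map_sum _ _
  rw [h1]
  rw [Finset.sum_congr rfl (fun ij hmem => sig_segOf p₁ p₂ t hp₁ hp₂ hfeas ij kl
    (Finset.mem_filter.1 hmem).2)]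
  rw [Finset.sum_ite_eq' (Finset.univ.filter fun ij => 0 < t ij) kl (fun ij => t ij)]
  by_cases hkl : 0 < t kl
  · have hmem : kl ∈ Finset.univ.filter (fun ij => 0 < t ij) :=
      Finset.mem_filter.2 ⟨Finset.mem_univ kl, hkl⟩
    rw [if_pos hmem]
  · have hmem : kl ∉ Finset.univ.filter (fun ij => 0 < t ij) :=
      fun hc => hkl (Finset.mem_filter.1 hc).2
    rw [if_neg hmem]
    exact le_antisymm (hfeas.1 kl) (not_lt.1 hkl)

lemma mCost_MOf (wdel wins : α → ℝ) (wsub : α → α → ℝ)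
    (hp₁ : ∀ x ∈ p₁, 0 < x.2) (hp₂ : ∀ x ∈ p₂, 0 < x.2) (hfeas : Feas p₁ p₂ t) :
    mCost wdel wins wsub p₁ p₂ (MOf p₁ p₂ t) = costT wdel wins wsub p₁ p₂ t := by
  rw [mCost_eq_costT wdel wins wsub p₁ p₂ hp₁ hp₂ (MOf p₁ p₂ t)
    (isMatching_MOf p₁ p₂ t hp₁ hp₂ hfeas), tOf_MOf p₁ p₂ t hp₁ hp₂ hfeas]

end Constr3

omit [Inhabited α] in
lemma exists_min_feas (wdel wins : α → ℝ) (wsub : α → α → ℝ) (p₁ p₂ : List (α × ℝ))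
    (hp₁ : ∀ x ∈ p₁, 0 < x.2) (hp₂ : ∀ x ∈ p₂, 0 < x.2) :
    ∃ t0, Feas p₁ p₂ t0 ∧ ∀ t, Feas p₁ p₂ t →
      costT wdel wins wsub p₁ p₂ t0 ≤ costT wdel wins wsub p₁ p₂ t := by
  set F := {t : Fin p₁.length × Fin p₂.length → ℝ | Feas p₁ p₂ t} with hF
  have hFc : IsClosed F := by
    have hFeq : F = (⋂ ij, {t : Fin p₁.length × Fin p₂.length → ℝ | 0 ≤ t ij}) ∩
        ((⋂ i, {t | ∑ j, t (i, j) ≤ (p₁.get i).2}) ∩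
        ((⋂ j, {t | ∑ i, t (i, j) ≤ (p₂.get j).2}) ∩
        (⋂ (i : Fin p₁.length) (i' : Fin p₁.length) (j : Fin p₂.length) (j' : Fin p₂.length) (_ : (i : ℕ) < (i' : ℕ)) (_ : (j' : ℕ) < (j : ℕ)),
          {t | t (i, j) * t (i', j') = 0}))) := by
      ext t
      simp only [Set.mem_inter_iff, Set.mem_iInter, Set.mem_setOf_eq, hF]
      constructor
      · rintro ⟨h1, h2, h3, h4⟩
        exact ⟨h1, h2, h3, fun i i' j j' hii hjj =>
          mul_eq_zero.2 (h4 i i' j j' hii hjj)⟩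
      · rintro ⟨h1, h2, h3, h4⟩
        exact ⟨h1, h2, h3, fun i i' j j' hii hjj =>
          mul_eq_zero.1 (h4 i i' j j' hii hjj)⟩
    rw [hFeq]
    refine (isClosed_iInter fun ij =>
        isClosed_le continuous_const (continuous_apply ij)).inter (IsClosed.inter ?_ (IsClosed.inter ?_ ?_))
    · exact isClosed_iInter fun i => isClosed_le
        (continuous_finset_sum _ fun j _ => continuous_apply (i, j)) continuous_const
    · exact isClosed_iInter fun j => isClosed_le
        (continuous_finset_sum _ fun i _ => continuous_apply (i, j)) continuous_const
    · exact isClosed_iInter fun i => isClosed_iInter fun i' => isClosed_iInter fun j =>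
        isClosed_iInter fun j' => isClosed_iInter fun _ => isClosed_iInter fun _ =>
          isClosed_eq ((continuous_apply (i, j)).mul (continuous_apply (i', j'))) continuous_const
  have hsub : F ⊆ Set.Icc (fun _ => (0:ℝ)) (fun ij => (p₁.get ij.1).2) := by
    intro t ht
    constructor
    · intro ij
      exact ht.1 ij
    · intro ij
      have h1 : t (ij.1, ij.2) ≤ ∑ j, t (ij.1, j) :=
        Finset.single_le_sum (f := fun j => t (ij.1, j)) (fun j _ => ht.1 _)
          (Finset.mem_univ ij.2)
      rw [Prod.mk.eta] at h1
      exact le_trans h1 (ht.2.1 ij.1)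
  have hFcpt : IsCompact F := IsCompact.of_isClosed_subset isCompact_Icc hFc hsub
  have h0 : (fun _ => (0:ℝ)) ∈ F := by
    refine ⟨fun ij => le_refl 0, fun i => ?_, fun j => ?_, fun i i' j j' _ _ => Or.inl rfl⟩
    · simp only [Finset.sum_const_zero]
      exact (hp₁ _ (List.get_mem p₁ i)).le
    · simp only [Finset.sum_const_zero]
      exact (hp₂ _ (List.get_mem p₂ j)).le
  have hcont : Continuous (costT wdel wins wsub p₁ p₂) := by
    refine Continuous.add (Continuous.add ?_ ?_) ?_
    · exact continuous_finset_sum _ fun i _ => continuous_const.mul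
        (continuous_const.sub (continuous_finset_sum _ fun j _ => continuous_apply (i, j)))
    · exact continuous_finset_sum _ fun j _ => continuous_const.mul
        (continuous_const.sub (continuous_finset_sum _ fun i _ => continuous_apply (i, j)))
    · exact continuous_finset_sum _ fun ij _ => (continuous_apply ij).mul continuous_const
  obtain ⟨t0, ht0, hmin⟩ := hFcpt.exists_isMinOn ⟨_, h0⟩ hcont.continuousOn
  exact ⟨t0, ht0, fun t ht => hmin ht⟩

end MatchAttain
end IntSec

open ExpStr in
/-- The infimum defining the exp-edit distance via exp-matchings is attained:
for `ℝ⁺`-exponent-strings `p₁, p₂` there is an exp-matching whose cost equals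
the infimum of the costs of all exp-matchings from `p₁` to `p₂`. -/
theorem matching_inf_attained {α : Type*} [DecidableEq α] [Inhabited α]
    (wdel wins : α → ℝ) (wsub : α → α → ℝ)
    (hdel : ∀ a, 0 < wdel a) (hins : ∀ a, 0 < wins a)
    (hsub0 : ∀ a, wsub a a = 0) (hsubpos : ∀ a b, a ≠ b → 0 < wsub a b)
    (htri₁ : ∀ a b c, wsub a c ≤ wsub a b + wsub b c)
    (htri₂ : ∀ a b, wsub a b ≤ wdel a + wins b)
    (htri₃ : ∀ a b, wins b ≤ wins a + wsub a b)
    (htri₄ : ∀ a b, wdel a ≤ wsub a b + wdel b)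
    (p₁ p₂ : List (α × ℝ)) (h₁ : RES p₁) (h₂ : RES p₂) :
    ∃ M : List (ℝ × ℝ × ℝ), IsMatching (eLen p₁) (eLen p₂) M ∧
      mCost wdel wins wsub p₁ p₂ M =
        sInf {c | ∃ M' : List (ℝ × ℝ × ℝ),
          IsMatching (eLen p₁) (eLen p₂) M' ∧ c = mCost wdel wins wsub p₁ p₂ M'} := by
  have hp₁ : ∀ x ∈ p₁, 0 < x.2 := h₁.2
  have hp₂ : ∀ x ∈ p₂, 0 < x.2 := h₂.2
  obtain ⟨t0, ht0, hmin⟩ := MatchAttain.exists_min_feas wdel wins wsub p₁ p₂ hp₁ hp₂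
  have hmatch : IsMatching (eLen p₁) (eLen p₂) (MatchAttain.MOf p₁ p₂ t0) :=
    MatchAttain.isMatching_MOf p₁ p₂ t0 hp₁ hp₂ ht0
  refine ⟨MatchAttain.MOf p₁ p₂ t0, hmatch, ?_⟩
  have hmem : mCost wdel wins wsub p₁ p₂ (MatchAttain.MOf p₁ p₂ t0) ∈
      {c | ∃ M' : List (ℝ × ℝ × ℝ), IsMatching (eLen p₁) (eLen p₂) M' ∧
        c = mCost wdel wins wsub p₁ p₂ M'} := ⟨MatchAttain.MOf p₁ p₂ t0, hmatch, rfl⟩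
  have hlb : ∀ c ∈ {c | ∃ M' : List (ℝ × ℝ × ℝ), IsMatching (eLen p₁) (eLen p₂) M' ∧
      c = mCost wdel wins wsub p₁ p₂ M'},
      mCost wdel wins wsub p₁ p₂ (MatchAttain.MOf p₁ p₂ t0) ≤ c := by
    rintro c ⟨M, hM, rfl⟩
    rw [MatchAttain.mCost_MOf p₁ p₂ t0 wdel wins wsub hp₁ hp₂ ht0,
      MatchAttain.mCost_eq_costT wdel wins wsub p₁ p₂ hp₁ hp₂ M hM]
    exact hmin _ (MatchAttain.feas_tOf p₁ p₂ hp₁ hp₂ M hM)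
  exact le_antisymm (le_csInf ⟨_, hmem⟩ hlb) (csInf_le ⟨_, hlb⟩ hmem)
end

section
/- For every exp-matching E from ℝ⁺-exponent-string u to ℝ⁺-exponent-string v, there exists a finite exp-edit sequence K from u to v whose total cost W(K) equals the cost of E. Consequently the infimum of exp-edit sequence costs is at most the infimum of exp-matching costs. -/
noncomputable section
namespace ExpStr
open MeasureTheory

variable {α : Type*} [DecidableEq α]

theorem rcat_nil (p : List (α × ℝ)) : rcat p [] = p := by
  unfold rcat eCat
  cases h : p.getLast? with
  | none => simp
  | some x => cases x; simp

theorem nil_rcat (q : List (α × ℝ)) : rcat [] q = q := by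
  unfold rcat eCat; simp

theorem append_rcat (A B r : List (α × ℝ)) (hB : B ≠ []) :
    rcat (A ++ B) r = A ++ rcat B r := by
  unfold rcat eCat
  cases r with
  | nil =>
    cases h : (A ++ B).getLast? with
    | none => simp at h; simp [h.2]
    | some x =>
      cases x
      cases h' : B.getLast? with
      | none => simp [List.getLast?_eq_none_iff] at h'; exact absurd h' hB
      | some y => cases y; simp
  | cons b r' =>
    obtain ⟨c, t⟩ := b
    have h1 : (A ++ B).getLast? = B.getLast? := List.getLast?_append_of_ne_nil _ hB
    cases h' : B.getLast? with
    | none => simp [List.getLast?_eq_none_iff] at h'; exact absurd h' hB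
    | some y =>
      obtain ⟨a, s⟩ := y
      rw [h1, h']
      by_cases hab : a = c
      · simp only [hab, if_pos rfl]
        rw [List.dropLast_append_of_ne_nil hB]
        simp
      · simp [hab]

theorem rcat_eq_dropLast (p q : List (α × ℝ)) (hp : p ≠ []) :
    rcat p q = p.dropLast ++ rcat [p.getLast hp] q := by
  conv_lhs => rw [← List.dropLast_append_getLast hp]
  rw [append_rcat _ _ _ (by simp)]

theorem rcat_single_cons (a b : α) (s t : ℝ) (q' : List (α × ℝ)) :
    rcat [(a, s)] ((b, t) :: q') =
      if a = b then (a, s + t) :: q' else (a, s) :: (b, t) :: q' := by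
  unfold rcat eCat; simp

/-- `rcat` of a nonempty list starting with char `b` has head char `b`. -/
theorem rcat_head (b : α) (t : ℝ) (q' r : List (α × ℝ)) :
    ∃ t' tl, rcat ((b, t) :: q') r = (b, t') :: tl := by
  cases q' with
  | nil =>
    cases r with
    | nil => exact ⟨t, [], by rw [rcat_nil]⟩
    | cons x r' =>
      obtain ⟨c, u⟩ := x
      rw [rcat_single_cons]
      by_cases h : b = c
      · exact ⟨t + u, r', by simp [h]⟩
      · exact ⟨t, (c, u) :: r', by simp [h]⟩
  | cons y q'' =>
    rw [show (b,t) :: y :: q'' = [(b,t)] ++ (y :: q'') from rfl,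
      append_rcat _ _ _ (by simp)]
    exact ⟨t, rcat (y :: q'') r, rfl⟩

theorem rcat_ne_nil (b : α) (t : ℝ) (q' r : List (α × ℝ)) :
    rcat ((b, t) :: q') r ≠ [] := by
  obtain ⟨t', tl, he⟩ := rcat_head b t q' r
  rw [he]; simp

theorem rcat_assoc (p q r : List (α × ℝ)) :
    rcat (rcat p q) r = rcat p (rcat q r) := by
  cases p with
  | nil => rw [nil_rcat, nil_rcat]
  | cons x p' =>
  cases q with
  | nil => rw [rcat_nil, nil_rcat]
  | cons yy q0 =>
  -- reduce to the single-head case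
  have key : ∀ (a : α) (s : ℝ) (b : α) (t : ℝ) (q' : List (α × ℝ)),
      rcat (rcat [(a, s)] ((b, t) :: q')) r
        = rcat [(a, s)] (rcat ((b, t) :: q') r) := by
    intro a s b t q'
    rw [rcat_single_cons]
    by_cases hab : a = b
    · simp only [if_pos hab]
      subst hab
      cases q' with
      | nil =>
        cases r with
        | nil =>
          rw [rcat_nil, rcat_nil, rcat_single_cons]
          simp
        | cons z r' =>
          obtain ⟨c, u⟩ := z
          rw [rcat_single_cons, rcat_single_cons]
          by_cases hbc : a = c
          · simp [hbc, rcat_single_cons, add_assoc]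
          · simp [hbc, rcat_single_cons]
      | cons z q'' =>
        rw [show (a, s+t) :: z :: q'' = [(a,s+t)] ++ (z :: q'') from rfl,
          append_rcat _ _ _ (by simp),
          show (a, t) :: z :: q'' = [(a,t)] ++ (z :: q'') from rfl,
          append_rcat _ _ _ (by simp)]
        obtain ⟨zc, zu⟩ := z
        obtain ⟨t', tl, he⟩ := rcat_head zc zu q'' r
        rw [he]
        simp only [List.singleton_append, rcat_single_cons]
        by_cases haz : a = zc
        · simp [haz]
        · simp [haz]
    · simp only [if_neg hab]
      rw [show (a, s) :: (b, t) :: q' = [(a,s)] ++ ((b,t) :: q') from rfl,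
        append_rcat _ _ _ (by simp)]
      obtain ⟨t', tl, he⟩ := rcat_head b t q' r
      rw [he]
      simp only [List.singleton_append, rcat_single_cons]
      simp [hab]
  obtain ⟨b, t⟩ := yy
  cases p' with
  | nil =>
    obtain ⟨a, s⟩ := x
    exact key a s b t q0
  | cons w p'' =>
    have hp : (x :: w :: p'' : List (α × ℝ)) ≠ [] := by simp
    obtain ⟨a, s, hlast⟩ : ∃ a s, (x :: w :: p'').getLast hp = (a, s) :=
      ⟨_, _, rfl⟩
    rw [rcat_eq_dropLast (x :: w :: p'') ((b,t) :: q0) hp, hlast,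
      append_rcat _ _ r (rcat_ne_nil a s [] _),
      rcat_eq_dropLast (x :: w :: p'') (rcat ((b,t) :: q0) r) hp, hlast,
      key a s b t q0]

end ExpStr
end
namespace ExpStr
open MeasureTheory

variable {α : Type*} [DecidableEq α]

theorem RES.tail {x : α × ℝ} {t : List (α × ℝ)} (h : RES (x :: t)) : RES t :=
  ⟨h.1.tail, fun y hy => h.2 y (List.mem_cons_of_mem _ hy)⟩

theorem eLen_nonneg {u : List (α × ℝ)} (hu : ∀ x ∈ u, 0 < x.2) : 0 ≤ eLen u := by
  unfold eLen
  apply List.sum_nonneg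
  intro y hy
  simp only [List.mem_map] at hy
  obtain ⟨x, hx, rfl⟩ := hy
  exact (hu x hx).le

theorem eLen_cons (x : α × ℝ) (t : List (α × ℝ)) : eLen (x :: t) = x.2 + eLen t := by
  simp [eLen]

theorem res_cons_eq_rcat {a : α} {s : ℝ} {t : List (α × ℝ)}
    (h : IsExp ((a, s) :: t)) : (a, s) :: t = rcat [(a, s)] t := by
  cases t with
  | nil => rw [rcat_nil]
  | cons y t' =>
    obtain ⟨b, u⟩ := y
    have hab : a ≠ b := (List.isChain_cons_cons.mp h).1
    rw [rcat_single_cons, if_neg hab]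

theorem RES.rcat {p q : List (α × ℝ)} (hp : RES p) (hq : RES q) :
    RES (ExpStr.rcat p q) := by
  cases p with
  | nil => rwa [nil_rcat]
  | cons x p' =>
  cases q with
  | nil => rwa [rcat_nil]
  | cons y q' =>
  obtain ⟨b, t⟩ := y
  have hp' : (x :: p' : List (α × ℝ)) ≠ [] := by simp
  obtain ⟨a, s, hlast⟩ : ∃ a s, (x :: p').getLast hp' = (a, s) := ⟨_, _, rfl⟩
  have hsplit : x :: p' = (x :: p').dropLast ++ [(a, s)] := by
    rw [← hlast, List.dropLast_append_getLast]
  rw [rcat_eq_dropLast _ _ hp', hlast, rcat_single_cons]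
  have hchain : IsExp (x :: p') := hp.1
  have hchainsplit := hchain
  rw [hsplit, IsExp, List.Chain', List.isChain_append] at hchainsplit
  obtain ⟨hcA, -, hbd⟩ := hchainsplit
  have hqchain := hq.1
  by_cases hab : a = b
  · subst hab
    rw [if_pos rfl]
    constructor
    · rw [IsExp, List.Chain', List.isChain_append]
      refine ⟨hcA, ?_, ?_⟩
      · rw [List.isChain_cons]
        constructor
        · intro z hz
          have := List.isChain_cons.mp hqchain
          exact this.1 z hz
        · exact hqchain.tail
      · intro z hz w hw
        simp only [List.head?_cons, Option.mem_def, Option.some.injEq] at hw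
        subst hw
        exact hbd z hz (a, s) (by simp)
    · intro z hz
      rcases List.mem_append.mp hz with h1 | h2
      · apply hp.2
        rw [hsplit]
        exact List.mem_append.mpr (Or.inl h1)
      · rcases List.mem_cons.mp h2 with rfl | h3
        · have hs : 0 < s := by
            apply hp.2 (a, s)
            rw [hsplit]; simp
          have ht : 0 < t := hq.2 (a, t) (by simp)
          exact add_pos hs ht
        · exact hq.2 z (List.mem_cons_of_mem _ h3)
  · rw [if_neg hab,
      show (x :: p').dropLast ++ (a, s) :: (b, t) :: q'
        = ((x :: p').dropLast ++ [(a, s)]) ++ ((b, t) :: q') by simp, ← hsplit]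
    constructor
    · rw [IsExp, List.Chain', List.isChain_append]
      refine ⟨hchain, hqchain, ?_⟩
      intro z hz w hw
      simp only [List.head?_cons, Option.mem_def, Option.some.injEq] at hw
      subst hw
      have hzz : (a, s) = z := by
        have := List.getLast?_eq_getLast (l := x :: p') hp'
        rw [this, hlast] at hz
        simpa using hz
      subst hzz
      exact hab
    · intro z hz
      rcases List.mem_append.mp hz with h1 | h2
      · exact hp.2 z h1
      · exact hq.2 z h2

/-- Take the part of an exponent string before real position `x`. -/
noncomputable def eTake : ℝ → List (α × ℝ) → List (α × ℝ)
  | _, [] => []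
  | x, (a, s) :: t =>
    if x ≤ 0 then [] else if x < s then [(a, x)] else (a, s) :: eTake (x - s) t
  termination_by _ u => u.length

/-- Drop the part of an exponent string before real position `x`. -/
noncomputable def eDrop : ℝ → List (α × ℝ) → List (α × ℝ)
  | _, [] => []
  | x, (a, s) :: t =>
    if x ≤ 0 then (a, s) :: t else if x < s then (a, s - x) :: t else eDrop (x - s) t
  termination_by _ u => u.length

@[simp] theorem eTake_nil (x : ℝ) : eTake x ([] : List (α × ℝ)) = [] := by
  rw [eTake]

theorem eTake_cons (x : ℝ) (a : α) (s : ℝ) (t : List (α × ℝ)) :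
    eTake x ((a, s) :: t) =
      if x ≤ 0 then [] else if x < s then [(a, x)] else (a, s) :: eTake (x - s) t := by
  rw [eTake]

@[simp] theorem eDrop_nil (x : ℝ) : eDrop x ([] : List (α × ℝ)) = [] := by
  rw [eDrop]

theorem eDrop_cons (x : ℝ) (a : α) (s : ℝ) (t : List (α × ℝ)) :
    eDrop x ((a, s) :: t) =
      if x ≤ 0 then (a, s) :: t else if x < s then (a, s - x) :: t
      else eDrop (x - s) t := by
  rw [eDrop]

theorem RES.eTake {u : List (α × ℝ)} (hu : RES u) (x : ℝ) : RES (ExpStr.eTake x u) := by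
  induction u generalizing x with
  | nil =>
    simp only [ExpStr.eTake_nil]
    exact ⟨List.isChain_nil, by simp⟩
  | cons y t ih =>
    obtain ⟨a, s⟩ := y
    rw [ExpStr.eTake_cons]
    by_cases h0 : x ≤ 0
    · rw [if_pos h0]; exact ⟨List.isChain_nil, by simp⟩
    · rw [if_neg h0]
      by_cases h1 : x < s
      · rw [if_pos h1]
        exact ⟨List.isChain_singleton _, by simp [lt_of_not_ge h0]⟩
      · rw [if_neg h1]
        constructor
        · rw [IsExp, List.Chain', List.isChain_cons]
          constructor
          · intro z hz
            -- head of eTake (x-s) t has same char as head of t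
            cases t with
            | nil => simp [ExpStr.eTake] at hz
            | cons w t' =>
              obtain ⟨b, u'⟩ := w
              rw [ExpStr.eTake_cons] at hz
              have hab : a ≠ b := (List.isChain_cons_cons.mp hu.1).1
              by_cases hz0 : x - s ≤ 0
              · simp [hz0] at hz
              · rw [if_neg hz0] at hz
                by_cases hz1 : x - s < u'
                · simp only [if_pos hz1, List.head?_cons, Option.mem_def,
                    Option.some.injEq] at hz
                  subst hz; exact hab
                · simp only [if_neg hz1, List.head?_cons, Option.mem_def,
                    Option.some.injEq] at hz
                  subst hz; exact hab
          · exact (ih hu.tail (x - s)).1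
        · intro z hz
          rcases List.mem_cons.mp hz with rfl | h2
          · exact hu.2 (a, s) (by simp)
          · exact (ih hu.tail (x - s)).2 z h2

theorem RES.eDrop {u : List (α × ℝ)} (hu : RES u) (x : ℝ) : RES (ExpStr.eDrop x u) := by
  induction u generalizing x with
  | nil =>
    simp only [ExpStr.eDrop_nil]
    exact ⟨List.isChain_nil, by simp⟩
  | cons y t ih =>
    obtain ⟨a, s⟩ := y
    rw [ExpStr.eDrop_cons]
    by_cases h0 : x ≤ 0
    · rw [if_pos h0]; exact hu
    · rw [if_neg h0]
      by_cases h1 : x < s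
      · rw [if_pos h1]
        constructor
        · have : IsExp ((a, s) :: t) := hu.1
          rw [IsExp, List.Chain', List.isChain_cons] at this ⊢
          exact ⟨this.1, this.2⟩
        · intro z hz
          rcases List.mem_cons.mp hz with rfl | h2
          · simpa using sub_pos.mpr h1
          · exact hu.2 z (List.mem_cons_of_mem _ h2)
      · rw [if_neg h1]
        exact ih hu.tail (x - s)

theorem eDrop_nonpos {x : ℝ} (hx : x ≤ 0) (u : List (α × ℝ)) : eDrop x u = u := by
  cases u with
  | nil => simp
  | cons y t => obtain ⟨a, s⟩ := y; rw [eDrop_cons, if_pos hx]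

theorem eTake_eq_nil {x : ℝ} {u : List (α × ℝ)} (h : eTake x u = []) :
    u = [] ∨ x ≤ 0 := by
  cases u with
  | nil => exact Or.inl rfl
  | cons y t =>
    obtain ⟨a, s⟩ := y
    right
    by_contra hc
    rw [eTake_cons, if_neg hc] at h
    by_cases h2 : x < s
    · simp [h2] at h
    · simp [h2] at h

theorem rcat_eTake_eDrop {u : List (α × ℝ)} (hu : RES u) (x : ℝ) :
    rcat (eTake x u) (eDrop x u) = u := by
  induction u generalizing x with
  | nil => simp [nil_rcat]
  | cons y t ih =>
    obtain ⟨a, s⟩ := y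
    rw [eTake_cons, eDrop_cons]
    by_cases h0 : x ≤ 0
    · rw [if_pos h0, if_pos h0, nil_rcat]
    · rw [if_neg h0, if_neg h0]
      by_cases h1 : x < s
      · rw [if_pos h1, if_pos h1, rcat_single_cons, if_pos rfl]
        norm_num
      · rw [if_neg h1, if_neg h1]
        cases he : eTake (x - s) t with
        | cons w A =>
          rw [show (a,s) :: (w :: A) = [(a,s)] ++ (w :: A) from rfl,
            append_rcat _ _ _ (by simp), ← he, ih hu.tail]
          rfl
        | nil =>
          rcases eTake_eq_nil he with rfl | hxs
          · rw [eDrop_nil, rcat_nil]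
          · rw [eDrop_nonpos hxs]
            exact (res_cons_eq_rcat hu.1).symm

end ExpStr
namespace ExpStr
open MeasureTheory

variable {α : Type*} [DecidableEq α]

theorem eLen_eTake {u : List (α × ℝ)} {x : ℝ} (h0 : 0 ≤ x) (h1 : x ≤ eLen u) :
    eLen (eTake x u) = x := by
  induction u generalizing x with
  | nil =>
    simp only [eTake_nil]
    have : eLen ([] : List (α × ℝ)) = 0 := by simp [eLen]
    rw [this] at h1
    simp [eLen]
    linarith
  | cons y t ih =>
    obtain ⟨a, s⟩ := y
    rw [eTake_cons]
    by_cases hx0 : x ≤ 0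
    · rw [if_pos hx0]; simp [eLen]; linarith
    · rw [if_neg hx0]
      by_cases hxs : x < s
      · rw [if_pos hxs]; simp [eLen]
      · rw [if_neg hxs, eLen_cons]
        rw [eLen_cons] at h1
        rw [ih (by linarith) (by linarith)]
        ring

theorem eLen_eDrop {u : List (α × ℝ)} {x : ℝ} (h0 : 0 ≤ x) (h1 : x ≤ eLen u) :
    eLen (eDrop x u) = eLen u - x := by
  induction u generalizing x with
  | nil =>
    have : eLen ([] : List (α × ℝ)) = 0 := by simp [eLen]
    rw [this] at h1
    simp [eLen]
    linarith
  | cons y t ih =>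
    obtain ⟨a, s⟩ := y
    rw [eDrop_cons]
    by_cases hx0 : x ≤ 0
    · have : x = 0 := le_antisymm hx0 h0
      simp [this]
    · rw [if_neg hx0]
      by_cases hxs : x < s
      · rw [if_pos hxs, eLen_cons, eLen_cons]; simp; ring
      · rw [if_neg hxs]
        rw [eLen_cons] at h1 ⊢
        rw [ih (by linarith) (by linarith)]
        ring

theorem charAt_cons [Inhabited α] (a : α) (s : ℝ) (t : List (α × ℝ)) (x : ℝ) :
    charAt ((a, s) :: t) x = if x < s then a else charAt t (x - s) := rfl

theorem charAt_nil [Inhabited α] (x : ℝ) : charAt ([] : List (α × ℝ)) x = default := rfl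

theorem charAt_eTake [Inhabited α] {u : List (α × ℝ)} {x y : ℝ}
    (h0 : 0 ≤ y) (h1 : y < x) : charAt (eTake x u) y = charAt u y := by
  induction u generalizing x y with
  | nil => simp
  | cons z t ih =>
    obtain ⟨a, s⟩ := z
    rw [eTake_cons]
    by_cases hx0 : x ≤ 0
    · linarith
    · rw [if_neg hx0]
      by_cases hxs : x < s
      · rw [if_pos hxs, charAt_cons, charAt_cons, if_pos h1, if_pos (show y < s by linarith)]
      · rw [if_neg hxs, charAt_cons, charAt_cons]
        by_cases hys : y < s
        · rw [if_pos hys, if_pos hys]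
        · rw [if_neg hys, if_neg hys]
          exact ih (by linarith) (by linarith)

theorem charAt_eDrop [Inhabited α] {u : List (α × ℝ)} {x y : ℝ}
    (hx : 0 ≤ x) (hy : 0 ≤ y) : charAt (eDrop x u) y = charAt u (x + y) := by
  induction u generalizing x y with
  | nil => simp [charAt_nil]
  | cons z t ih =>
    obtain ⟨a, s⟩ := z
    rw [eDrop_cons]
    by_cases hx0 : x ≤ 0
    · have : x = 0 := le_antisymm hx0 hx
      simp [this]
    · rw [if_neg hx0]
      by_cases hxs : x < s
      · rw [if_pos hxs, charAt_cons, charAt_cons]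
        by_cases hys : y < s - x
        · rw [if_pos hys, if_pos (by linarith)]
        · rw [if_neg hys, if_neg (by linarith)]
          congr 1
          ring
      · rw [if_neg hxs, charAt_cons, if_neg (by linarith)]
        rw [ih (by linarith) hy]
        congr 1
        ring

/-- Every value of `charAt` is either `default` or a character of the string. -/
theorem charAt_mem [Inhabited α] (u : List (α × ℝ)) (x : ℝ) :
    charAt u x = default ∨ charAt u x ∈ u.map Prod.fst := by
  induction u generalizing x with
  | nil => exact Or.inl rfl
  | cons z t ih =>
    obtain ⟨a, s⟩ := z
    rw [charAt_cons]
    by_cases h : x < s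
    · rw [if_pos h]; right; simp
    · rw [if_neg h]
      rcases ih (x - s) with h1 | h1
      · exact Or.inl h1
      · right; simp only [List.map_cons, List.mem_cons]; exact Or.inr h1

theorem measurable_charAt [Inhabited α] (g : α → ℝ) (u : List (α × ℝ)) :
    Measurable fun x => g (charAt u x) := by
  induction u with
  | nil =>
    simp only [charAt_nil]
    exact measurable_const
  | cons z t ih =>
    obtain ⟨a, s⟩ := z
    have : (fun x => g (charAt ((a, s) :: t) x)) =
        fun x => if x < s then g a else g (charAt t (x - s)) := by
      funext x
      rw [charAt_cons, apply_ite g]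
    rw [this]
    exact Measurable.ite measurableSet_Iio measurable_const
      (ih.comp (measurable_id.sub measurable_const))

theorem bound_charAt [Inhabited α] (g : α → ℝ) (u : List (α × ℝ)) :
    ∃ C, ∀ x, |g (charAt u x)| ≤ C := by
  induction u with
  | nil => exact ⟨|g default|, fun x => le_refl _⟩
  | cons z t ih =>
    obtain ⟨a, s⟩ := z
    obtain ⟨C, hC⟩ := ih
    refine ⟨max (|g a|) C, fun x => ?_⟩
    rw [charAt_cons]
    by_cases h : x < s
    · rw [if_pos h]; exact le_max_left _ _
    · rw [if_neg h]; exact le_trans (hC _) (le_max_right _ _)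

theorem measurable_charAt₂ [Inhabited α] (k : α → α → ℝ) (u v : List (α × ℝ)) (c d : ℝ) :
    Measurable fun x => k (charAt u (c + x)) (charAt v (d + x)) := by
  induction u generalizing c with
  | nil =>
    exact (measurable_charAt (k default) v).comp (measurable_const.add measurable_id)
  | cons z t ih =>
    obtain ⟨a, s⟩ := z
    have : (fun x => k (charAt ((a, s) :: t) (c + x)) (charAt v (d + x))) =
        fun x => if x < s - c then k a (charAt v (d + x))
          else k (charAt t ((c - s) + x)) (charAt v (d + x)) := by
      funext x
      rw [charAt_cons]
      by_cases h : c + x < s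
      · rw [if_pos h, if_pos (by linarith)]
      · rw [if_neg h, if_neg (by linarith), show c + x - s = (c - s) + x by ring]
    rw [this]
    exact Measurable.ite measurableSet_Iio
      ((measurable_charAt (k a) v).comp (measurable_const.add measurable_id))
      (ih (c - s))

theorem bound_charAt₂ [Inhabited α] (k : α → α → ℝ) (u v : List (α × ℝ)) :
    ∃ C, ∀ c d x : ℝ, |k (charAt u (c + x)) (charAt v (d + x))| ≤ C := by
  induction u with
  | nil =>
    obtain ⟨C, hC⟩ := bound_charAt (k default) v
    exact ⟨C, fun c d x => hC _⟩
  | cons z t ih =>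
    obtain ⟨a, s⟩ := z
    obtain ⟨C, hC⟩ := ih
    obtain ⟨C', hC'⟩ := bound_charAt (k a) v
    refine ⟨max C' C, fun c d x => ?_⟩
    rw [charAt_cons]
    by_cases h : c + x < s
    · rw [if_pos h]; exact le_trans (hC' _) (le_max_left _ _)
    · rw [if_neg h, show c + x - s = (c - s) + x by ring]
      exact le_trans (hC (c - s) d x) (le_max_right _ _)

theorem integrableOn_of_bound {f : ℝ → ℝ} (hm : Measurable f) {C : ℝ}
    (hb : ∀ x, |f x| ≤ C) {s : Set ℝ} (hs : volume s < ⊤) :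
    IntegrableOn f s := by
  refine Integrable.mono' (g := fun _ => C) ?_ (hm.aestronglyMeasurable.restrict) ?_
  · exact integrableOn_const hs.ne
  · exact Filter.Eventually.of_forall fun x => hb x

theorem setIntegral_shift (g : ℝ → ℝ) (c : ℝ) (s : Set ℝ) :
    ∫ x in (fun y => c + y) '' s, g x = ∫ x in s, g (c + x) :=
  (measurePreserving_add_left volume c).setIntegral_image_emb
    (measurableEmbedding_addLeft c) g s

/-- Integral of a function of `charAt` over the whole string is the
corresponding weighted sum over runs. -/
theorem integral_charAt [Inhabited α] (g : α → ℝ) {u : List (α × ℝ)} (hu : RES u) :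
    ∫ x in Set.Ico 0 (eLen u), g (charAt u x) = (u.map fun p => p.2 * g p.1).sum := by
  induction u with
  | nil => simp [eLen]
  | cons z t ih =>
    obtain ⟨a, s⟩ := z
    have hs : 0 < s := hu.2 (a, s) (by simp)
    have hL : 0 ≤ eLen t := eLen_nonneg (fun x hx => hu.2 x (List.mem_cons_of_mem _ hx))
    rw [eLen_cons, show ((a, s) : α × ℝ).2 = s from rfl]
    obtain ⟨C, hC⟩ := bound_charAt g ((a, s) :: t)
    have hmeas := measurable_charAt g ((a, s) :: t)
    have hsplit : Set.Ico (0:ℝ) (s + eLen t) = Set.Ico 0 s ∪ Set.Ico s (s + eLen t) := by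
      rw [Set.Ico_union_Ico_eq_Ico (by linarith) (by linarith)]
    rw [hsplit, setIntegral_union (Set.Ico_disjoint_Ico.mpr (le_max_of_le_right (min_le_left _ _)))
      measurableSet_Ico
      (integrableOn_of_bound hmeas hC (by simp))
      (integrableOn_of_bound hmeas hC (by simp))]
    have h1 : (∫ x in Set.Ico (0:ℝ) s, g (charAt ((a,s) :: t) x)) = s * g a := by
      rw [setIntegral_congr_fun measurableSet_Ico
        (g := fun _ => g a) (fun x hx => by rw [charAt_cons, if_pos hx.2])]
      simp [Real.volume_Ico, ENNReal.toReal_ofReal hs.le, hs.le]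
    have h2 : ∫ x in Set.Ico s (s + eLen t), g (charAt ((a,s) :: t) x)
        = ∫ x in Set.Ico (0:ℝ) (eLen t), g (charAt t x) := by
      rw [setIntegral_congr_fun measurableSet_Ico
        (g := fun x => g (charAt t (x - s)))
        (fun x hx => by rw [charAt_cons, if_neg (not_lt.mpr hx.1)])]
      have himg : Set.Ico s (s + eLen t) = (fun y => s + y) '' Set.Ico 0 (eLen t) := by
        rw [Set.image_const_add_Ico]
        norm_num
      rw [himg, setIntegral_shift (fun x => g (charAt t (x - s))) s]
      congr 1
      funext x
      congr 1
      ring_nf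
    rw [h1, h2, ih hu.tail]
    simp [List.map_cons]

end ExpStr
namespace ExpStr
open MeasureTheory

variable {α : Type*} [DecidableEq α] {wdel wins : α → ℝ} {wsub : α → α → ℝ}

theorem res_nil : RES ([] : List (α × ℝ)) := ⟨List.isChain_nil, by simp⟩

theorem res_single (a : α) {q : ℝ} (hq : 0 < q) : RES [(a, q)] :=
  ⟨List.isChain_singleton _, by simp [hq]⟩

theorem EditCost.cast {u v : List (α × ℝ)} {c c' : ℝ}
    (h : EditCost wdel wins wsub u v c) (e : c = c') : EditCost wdel wins wsub u v c' :=
  e ▸ h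

theorem EditCost.trans {u w v : List (α × ℝ)} {c₁ c₂ : ℝ}
    (h1 : EditCost wdel wins wsub u w c₁) (h2 : EditCost wdel wins wsub w v c₂) :
    EditCost wdel wins wsub u v (c₁ + c₂) := by
  induction h2 with
  | refl => exact h1.cast (by ring)
  | step h st ih => exact (ih.step st).cast (by ring)

theorem editCost_single_step {u v : List (α × ℝ)} {c : ℝ}
    (st : Step wdel wins wsub u v c) : EditCost wdel wins wsub u v c :=
  (EditCost.refl.step st).cast (zero_add c)

theorem editCost_ins (a : α) {q : ℝ} (hq : 0 < q) :
    EditCost wdel wins wsub [] [(a, q)] (q * wins a) := by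
  apply editCost_single_step
  refine ⟨[], [], res_nil, res_nil, Or.inl ⟨a, q, hq, ?_, ?_, rfl⟩⟩
  · rw [nil_rcat]
  · rw [nil_rcat, rcat_nil]

theorem editCost_del (a : α) {q : ℝ} (hq : 0 < q) :
    EditCost wdel wins wsub [(a, q)] [] (q * wdel a) := by
  apply editCost_single_step
  refine ⟨[], [], res_nil, res_nil, Or.inr (Or.inl ⟨a, q, hq, ?_, ?_, rfl⟩)⟩
  · rw [nil_rcat, rcat_nil]
  · rw [nil_rcat]

theorem editCost_sub (a b : α) {q : ℝ} (hq : 0 < q) :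
    EditCost wdel wins wsub [(a, q)] [(b, q)] (q * wsub a b) := by
  apply editCost_single_step
  refine ⟨[], [], res_nil, res_nil, Or.inr (Or.inr ⟨a, b, q, hq, ?_, ?_, rfl⟩)⟩
  · rw [nil_rcat, rcat_nil]
  · rw [nil_rcat, rcat_nil]

theorem Step.lift_left {w p q : List (α × ℝ)} {c : ℝ} (hw : RES w)
    (st : Step wdel wins wsub p q c) :
    Step wdel wins wsub (rcat w p) (rcat w q) c := by
  obtain ⟨p₁, p₂, h₁, h₂, hcase⟩ := st
  refine ⟨rcat w p₁, p₂, hw.rcat h₁, h₂, ?_⟩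
  rcases hcase with ⟨a, q', hq', e1, e2, e3⟩ | ⟨a, q', hq', e1, e2, e3⟩ |
    ⟨a, b, q', hq', e1, e2, e3⟩
  · exact Or.inl ⟨a, q', hq', by rw [e1, rcat_assoc], by rw [e2, rcat_assoc], e3⟩
  · exact Or.inr (Or.inl ⟨a, q', hq', by rw [e1, rcat_assoc], by rw [e2, rcat_assoc], e3⟩)
  · exact Or.inr (Or.inr ⟨a, b, q', hq', by rw [e1, rcat_assoc], by rw [e2, rcat_assoc], e3⟩)

theorem Step.lift_right {w p q : List (α × ℝ)} {c : ℝ} (hw : RES w)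
    (st : Step wdel wins wsub p q c) :
    Step wdel wins wsub (rcat p w) (rcat q w) c := by
  obtain ⟨p₁, p₂, h₁, h₂, hcase⟩ := st
  refine ⟨p₁, rcat p₂ w, h₁, h₂.rcat hw, ?_⟩
  rcases hcase with ⟨a, q', hq', e1, e2, e3⟩ | ⟨a, q', hq', e1, e2, e3⟩ |
    ⟨a, b, q', hq', e1, e2, e3⟩
  · exact Or.inl ⟨a, q', hq', by rw [e1, rcat_assoc],
      by rw [e2, rcat_assoc, rcat_assoc], e3⟩
  · exact Or.inr (Or.inl ⟨a, q', hq', by rw [e1, rcat_assoc, rcat_assoc],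
      by rw [e2, rcat_assoc], e3⟩)
  · exact Or.inr (Or.inr ⟨a, b, q', hq', by rw [e1, rcat_assoc, rcat_assoc],
      by rw [e2, rcat_assoc, rcat_assoc], e3⟩)

theorem EditCost.lift_left {w p q : List (α × ℝ)} {c : ℝ} (hw : RES w)
    (h : EditCost wdel wins wsub p q c) :
    EditCost wdel wins wsub (rcat w p) (rcat w q) c := by
  induction h with
  | refl => exact EditCost.refl
  | step h st ih => exact ih.step (st.lift_left hw)

theorem EditCost.lift_right {w p q : List (α × ℝ)} {c : ℝ} (hw : RES w)
    (h : EditCost wdel wins wsub p q c) :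
    EditCost wdel wins wsub (rcat p w) (rcat q w) c := by
  induction h with
  | refl => exact EditCost.refl
  | step h st ih => exact ih.step (st.lift_right hw)

theorem EditCost.concat {u₁ u₂ v₁ v₂ : List (α × ℝ)} {c₁ c₂ : ℝ}
    (hu₂ : RES u₂) (hv₁ : RES v₁)
    (h1 : EditCost wdel wins wsub u₁ v₁ c₁) (h2 : EditCost wdel wins wsub u₂ v₂ c₂) :
    EditCost wdel wins wsub (rcat u₁ u₂) (rcat v₁ v₂) (c₁ + c₂) :=
  (h1.lift_right hu₂).trans (h2.lift_left hv₁)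

theorem editCost_deleteAll {u : List (α × ℝ)} (hu : RES u) :
    EditCost wdel wins wsub u [] ((u.map fun p => p.2 * wdel p.1).sum) := by
  induction u with
  | nil => exact EditCost.refl.cast (by simp)
  | cons z t ih =>
    obtain ⟨a, s⟩ := z
    have hs : 0 < s := hu.2 (a, s) (by simp)
    have h := EditCost.concat hu.tail res_nil (editCost_del a hs) (ih hu.tail)
    rw [nil_rcat, ← res_cons_eq_rcat hu.1] at h
    exact h.cast (by simp)

theorem editCost_insertAll {v : List (α × ℝ)} (hv : RES v) :
    EditCost wdel wins wsub [] v ((v.map fun p => p.2 * wins p.1).sum) := by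
  induction v with
  | nil => exact EditCost.refl.cast (by simp)
  | cons z t ih =>
    obtain ⟨a, s⟩ := z
    have hs : 0 < s := hv.2 (a, s) (by simp)
    have h := EditCost.concat res_nil (res_single a hs) (editCost_ins a hs) (ih hv.tail)
    rw [nil_rcat, ← res_cons_eq_rcat hv.1] at h
    exact h.cast (by simp)

/-- Substituting one run into a whole string of the same length. -/
theorem editCost_sub_one (a : α) {w : List (α × ℝ)} (hw : RES w) (hne : w ≠ []) :
    EditCost wdel wins wsub [(a, eLen w)] w ((w.map fun p => p.2 * wsub a p.1).sum) := by
  induction w with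
  | nil => exact absurd rfl hne
  | cons z t ih =>
    obtain ⟨b, s⟩ := z
    have hs : 0 < s := hw.2 (b, s) (by simp)
    cases t with
    | nil =>
      have : eLen [(b, s)] = s := by simp [eLen]
      rw [this]
      exact (editCost_sub a b hs).cast (by simp)
    | cons z' t' =>
      have hLt : 0 < eLen (z' :: t') := by
        rw [eLen_cons]
        have h1 : 0 < z'.2 := hw.2 z' (by simp)
        have h2 : 0 ≤ eLen t' :=
          eLen_nonneg (fun x hx => hw.2 x (by simp [hx]))
        linarith
      have hsplit : [(a, eLen ((b, s) :: z' :: t'))]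
          = rcat [(a, s)] [(a, eLen (z' :: t'))] := by
        rw [rcat_single_cons, if_pos rfl, eLen_cons]
      rw [hsplit]
      have h := EditCost.concat (res_single a hLt)
        (res_single b hs) (editCost_sub a b hs) (ih hw.tail (by simp))
      rw [← res_cons_eq_rcat hw.1] at h
      exact h.cast (by simp)

theorem measurable_charAt₂' [Inhabited α] (k : α → α → ℝ) (u v : List (α × ℝ)) :
    Measurable fun x => k (charAt u x) (charAt v x) := by
  have := measurable_charAt₂ k u v 0 0
  simpa using this

theorem bound_charAt₂' [Inhabited α] (k : α → α → ℝ) (u v : List (α × ℝ)) :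
    ∃ C, ∀ x, |k (charAt u x) (charAt v x)| ≤ C := by
  obtain ⟨C, hC⟩ := bound_charAt₂ k u v
  exact ⟨C, fun x => by simpa using hC 0 0 x⟩

/-- Substitution of a whole string by an equal-length one, with the
integral substitution cost. -/
theorem editCost_substAll [Inhabited α] {p q : List (α × ℝ)} (hp : RES p) (hq : RES q)
    (hlen : eLen p = eLen q) :
    EditCost wdel wins wsub p q
      (∫ x in Set.Ico 0 (eLen p), wsub (charAt p x) (charAt q x)) := by
  induction p generalizing q with
  | nil =>
    have h0 : eLen ([] : List (α × ℝ)) = 0 := by simp [eLen]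
    have hq0 : q = [] := by
      cases q with
      | nil => rfl
      | cons z t =>
        exfalso
        have h1 : 0 < z.2 := hq.2 z (by simp)
        have h2 : 0 ≤ eLen t := eLen_nonneg fun x hx => hq.2 x (by simp [hx])
        rw [h0, eLen_cons] at hlen
        linarith
    subst hq0
    rw [h0]
    exact EditCost.refl.cast (by simp)
  | cons z t ih =>
    obtain ⟨a, s⟩ := z
    have hs : 0 < s := hp.2 (a, s) (by simp)
    have hLt : 0 ≤ eLen t := eLen_nonneg fun x hx => hp.2 x (by simp [hx])
    have hsq : s ≤ eLen q := by rw [← hlen, eLen_cons]; simp; linarith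
    have hrw : rcat (eTake s q) (eDrop s q) = q := rcat_eTake_eDrop hq s
    have hlw : eLen (eTake s q) = s := eLen_eTake hs.le hsq
    have hlw' : eLen (eDrop s q) = eLen q - s := eLen_eDrop hs.le hsq
    have hwne : eTake s q ≠ [] := by
      intro h
      rw [h] at hlw
      simp [eLen] at hlw
      linarith
    have h1 : EditCost wdel wins wsub [(a, s)] (eTake s q)
        (((eTake s q).map fun r => r.2 * wsub a r.1).sum) := by
      have := editCost_sub_one (wdel := wdel) (wins := wins) (wsub := wsub) a
        (hq.eTake s) hwne
      rwa [hlw] at this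
    have h2 : EditCost wdel wins wsub t (eDrop s q)
        (∫ x in Set.Ico 0 (eLen t), wsub (charAt t x) (charAt (eDrop s q) x)) := by
      apply ih hp.tail (hq.eDrop s)
      rw [hlw', ← hlen, eLen_cons]
      simp
    have h := EditCost.concat hp.tail (hq.eTake s) h1 h2
    rw [← res_cons_eq_rcat hp.1, hrw] at h
    apply h.cast
    -- Now the integral identity
    have hmeas := measurable_charAt₂' wsub ((a, s) :: t) q
    obtain ⟨C, hC⟩ := bound_charAt₂' wsub ((a, s) :: t) q
    rw [eLen_cons, show ((a, s) : α × ℝ).2 = s from rfl]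
    have hsplit : Set.Ico (0:ℝ) (s + eLen t) = Set.Ico 0 s ∪ Set.Ico s (s + eLen t) := by
      rw [Set.Ico_union_Ico_eq_Ico (by linarith) (by linarith)]
    rw [hsplit, setIntegral_union (Set.Ico_disjoint_Ico.mpr
        (le_max_of_le_right (min_le_left _ _))) measurableSet_Ico
      (integrableOn_of_bound hmeas hC (by simp))
      (integrableOn_of_bound hmeas hC (by simp))]
    congr 1
    · -- piece 1
      rw [← integral_charAt (wsub a) (hq.eTake s), hlw]
      apply setIntegral_congr_fun measurableSet_Ico
      intro x hx
      show wsub a (charAt (eTake s q) x) = wsub (charAt ((a, s) :: t) x) (charAt q x)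
      rw [charAt_eTake hx.1 hx.2, charAt_cons, if_pos hx.2]
    · -- piece 2
      have hcongr : ∀ x ∈ Set.Ico s (s + eLen t),
          wsub (charAt ((a,s) :: t) x) (charAt q x)
            = wsub (charAt t (x - s)) (charAt (eDrop s q) (x - s)) := by
        intro x hx
        rw [charAt_cons, if_neg (not_lt.mpr hx.1),
          charAt_eDrop hs.le (by linarith [hx.1]),
          show s + (x - s) = x by ring]
      rw [setIntegral_congr_fun measurableSet_Ico hcongr]
      have himg : Set.Ico s (s + eLen t) = (fun y => s + y) '' Set.Ico 0 (eLen t) := by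
        rw [Set.image_const_add_Ico]
        norm_num
      rw [himg, setIntegral_shift
        (fun x => wsub (charAt t (x - s)) (charAt (eDrop s q) (x - s))) s]
      apply setIntegral_congr_fun measurableSet_Ico
      intro x _
      simp only [add_sub_cancel_left]

end ExpStr
namespace ExpStr
open MeasureTheory

variable {α : Type*} [DecidableEq α]

theorem mem_mEX {M : List (ℝ × ℝ × ℝ)} {z : ℝ} :
    z ∈ mEX M ↔ ∃ m ∈ M, m.1 ≤ z ∧ z < m.1 + m.2.2 := by
  simp only [mEX, mSegX, Set.mem_iUnion, Set.mem_Ico, exists_prop]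

theorem mem_mEY {M : List (ℝ × ℝ × ℝ)} {z : ℝ} :
    z ∈ mEY M ↔ ∃ m ∈ M, m.2.1 ≤ z ∧ z < m.2.1 + m.2.2 := by
  simp only [mEY, mSegY, Set.mem_iUnion, Set.mem_Ico, exists_prop]

@[simp] theorem mEX_nil : mEX [] = ∅ := by simp [mEX]
@[simp] theorem mEY_nil : mEY [] = ∅ := by simp [mEY]

theorem measurableSet_mEX (M : List (ℝ × ℝ × ℝ)) : MeasurableSet (mEX M) :=
  MeasurableSet.biUnion (M.finite_toSet.countable) (fun _ _ => measurableSet_Ico)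

theorem measurableSet_mEY (M : List (ℝ × ℝ × ℝ)) : MeasurableSet (mEY M) :=
  MeasurableSet.biUnion (M.finite_toSet.countable) (fun _ _ => measurableSet_Ico)

theorem isMatching_nil (L₁ L₂ : ℝ) : IsMatching L₁ L₂ [] := by
  refine ⟨by simp, by simp, by simp⟩

/-- deletion of a whole string, at integral cost. -/
theorem editCost_delete_integral [Inhabited α] {wdel wins : α → ℝ} {wsub : α → α → ℝ}
    {u : List (α × ℝ)} (hu : RES u) :
    EditCost wdel wins wsub u [] (∫ x in Set.Ico 0 (eLen u), wdel (charAt u x)) :=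
  (editCost_deleteAll hu).cast (integral_charAt wdel hu).symm

theorem editCost_insert_integral [Inhabited α] {wdel wins : α → ℝ} {wsub : α → α → ℝ}
    {v : List (α × ℝ)} (hv : RES v) :
    EditCost wdel wins wsub [] v (∫ x in Set.Ico 0 (eLen v), wins (charAt v x)) :=
  (editCost_insertAll hv).cast (integral_charAt wins hv).symm

theorem editCost_nonneg {wdel wins : α → ℝ} {wsub : α → α → ℝ}
    (hdel : ∀ a, 0 ≤ wdel a) (hins : ∀ a, 0 ≤ wins a) (hsub : ∀ a b, 0 ≤ wsub a b)
    {u v : List (α × ℝ)} {c : ℝ} (h : EditCost wdel wins wsub u v c) : 0 ≤ c := by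
  induction h with
  | refl => exact le_refl 0
  | step h st ih =>

    obtain ⟨p₁, p₂, -, -, hcase⟩ := st
    rcases hcase with ⟨a, q, hq, -, -, rfl⟩ | ⟨a, q, hq, -, -, rfl⟩ | ⟨a, b, q, hq, -, -, rfl⟩
    · have := mul_nonneg hq.le (hins a); linarith
    · have := mul_nonneg hq.le (hdel a); linarith
    · have := mul_nonneg hq.le (hsub a b); linarith

end ExpStr
namespace ExpStr
open MeasureTheory

variable {α : Type*} [DecidableEq α] [Inhabited α]

theorem matching_realizable (wdel wins : α → ℝ) (wsub : α → α → ℝ) :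
    ∀ (n : ℕ) (M : List (ℝ × ℝ × ℝ)) (u v : List (α × ℝ)), M.length = n →
      RES u → RES v → IsMatching (eLen u) (eLen v) M →
      EditCost wdel wins wsub u v (mCost wdel wins wsub u v M) := by
  intro n
  induction n with
  | zero =>
    intro M u v hlen hu hv hM
    have hM0 : M = [] := List.length_eq_zero_iff.mp hlen
    subst hM0
    have h := (editCost_delete_integral (wdel := wdel) (wins := wins) (wsub := wsub)
      hu).trans (editCost_insert_integral hv)
    apply h.cast
    simp [mCost]
  | succ n ih =>
    intro M u v hlen hu hv hM
    obtain ⟨hbounds, hpairM, hmono⟩ := hM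
    have hMne : M ≠ [] := by intro h; rw [h] at hlen; simp at hlen
    obtain ⟨m₀, hm₀s, hmin'⟩ := Set.exists_min_image {m : ℝ × ℝ × ℝ | m ∈ M}
      (fun m => m.1) (List.finite_toSet M)
      (by obtain ⟨m, hm⟩ := List.exists_mem_of_ne_nil M hMne; exact ⟨m, hm⟩)
    obtain ⟨x₀, y₀, t⟩ := m₀
    have hm₀ : (x₀, y₀, t) ∈ M := hm₀s
    have hmin : ∀ b ∈ M, x₀ ≤ b.1 := fun b hb => hmin' b hb
    obtain ⟨ht, hx₀, hy₀, hXL, hYL⟩ := hbounds _ hm₀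
    -- the rest of the matching
    obtain ⟨l₁, l₂, hMsplit⟩ := List.append_of_mem hm₀
    have hperm : List.Perm M ((x₀, y₀, t) :: (l₁ ++ l₂)) := by
      rw [hMsplit]; exact List.perm_middle
    set M' := l₁ ++ l₂ with hM'def
    have hlen' : M'.length = n := by
      have h2 := hperm.length_eq
      rw [hlen] at h2
      simpa using h2.symm
    have hmemM' : ∀ m' ∈ M', m' ∈ M := fun m' h =>
      hperm.mem_iff.mpr (List.mem_cons_of_mem _ h)
    have hpair' := (hperm.pairwise_iff
      (fun {m m' : ℝ × ℝ × ℝ} h => ⟨h.1.symm, h.2.symm⟩)).mp hpairM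
    have hdisj : ∀ m' ∈ M', Disjoint (mSegX (x₀,y₀,t)) (mSegX m')
        ∧ Disjoint (mSegY (x₀,y₀,t)) (mSegY m') :=
      fun m' h => (List.pairwise_cons.mp hpair').1 m' h
    have hpairM' := (List.pairwise_cons.mp hpair').2
    have hXmin : ∀ m' ∈ M', x₀ + t ≤ m'.1 := by
      intro m' h
      by_contra hc
      push_neg at hc
      have ht' : 0 < m'.2.2 := (hbounds m' (hmemM' m' h)).1
      have hx : x₀ ≤ m'.1 := hmin m' (hmemM' m' h)
      have hmem1 : m'.1 ∈ mSegX (x₀, y₀, t) := by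
        simp only [mSegX, Set.mem_Ico]; exact ⟨hx, hc⟩
      have hmem2 : m'.1 ∈ mSegX m' := by
        simp only [mSegX, Set.mem_Ico]; constructor <;> linarith
      exact Set.disjoint_left.mp (hdisj m' h).1 hmem1 hmem2
    have hYmin : ∀ m' ∈ M', y₀ + t ≤ m'.2.1 := by
      intro m' h
      apply le_of_forall_sub_le
      intro ε hε
      have hs0 : (0:ℝ) ≤ max 0 (t - ε) := le_max_left _ _
      have hst : max 0 (t - ε) < t := max_lt ht (by linarith)
      have hmo := hmono (x₀,y₀,t) hm₀ m' (hmemM' m' h) (max 0 (t-ε)) 0 hs0 hst le_rfl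
        (hbounds m' (hmemM' m' h)).1 (by simp only [add_zero]; linarith [hXmin m' h])
      have h2 : t - ε ≤ max 0 (t - ε) := le_max_right _ _
      simp only [add_zero] at hmo
      linarith
    -- lengths of the pieces
    have hLurest : eLen (eDrop x₀ u) = eLen u - x₀ := eLen_eDrop hx₀ (by linarith)
    have hLvrest : eLen (eDrop y₀ v) = eLen v - y₀ := eLen_eDrop hy₀ (by linarith)
    have hlu₁ : eLen (eTake x₀ u) = x₀ := eLen_eTake hx₀ (by linarith)
    have hlv₁ : eLen (eTake y₀ v) = y₀ := eLen_eTake hy₀ (by linarith)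
    have hlu₂ : eLen (eTake t (eDrop x₀ u)) = t :=
      eLen_eTake ht.le (by rw [hLurest]; linarith)
    have hlv₂ : eLen (eTake t (eDrop y₀ v)) = t :=
      eLen_eTake ht.le (by rw [hLvrest]; linarith)
    have hlu₃ : eLen (eDrop t (eDrop x₀ u)) = eLen u - (x₀ + t) := by
      rw [eLen_eDrop ht.le (by rw [hLurest]; linarith), hLurest]; ring
    have hlv₃ : eLen (eDrop t (eDrop y₀ v)) = eLen v - (y₀ + t) := by
      rw [eLen_eDrop ht.le (by rw [hLvrest]; linarith), hLvrest]; ring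
    -- RES of the pieces
    have hru₁ := hu.eTake x₀
    have hrur := hu.eDrop x₀
    have hru₂ := hrur.eTake t
    have hru₃ := hrur.eDrop t
    have hrv₁ := hv.eTake y₀
    have hrvr := hv.eDrop y₀
    have hrv₂ := hrvr.eTake t
    have hrv₃ := hrvr.eDrop t
    -- charAt transfer
    have hcu₁ : ∀ z : ℝ, 0 ≤ z → z < x₀ → charAt (eTake x₀ u) z = charAt u z :=
      fun z hz hzx => charAt_eTake hz hzx
    have hcv₁ : ∀ z : ℝ, 0 ≤ z → z < y₀ → charAt (eTake y₀ v) z = charAt v z :=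
      fun z hz hzy => charAt_eTake hz hzy
    have hcu₂ : ∀ z : ℝ, 0 ≤ z → z < t →
        charAt (eTake t (eDrop x₀ u)) z = charAt u (x₀ + z) := by
      intro z hz hzt
      rw [charAt_eTake hz hzt, charAt_eDrop hx₀ hz]
    have hcv₂ : ∀ z : ℝ, 0 ≤ z → z < t →
        charAt (eTake t (eDrop y₀ v)) z = charAt v (y₀ + z) := by
      intro z hz hzt
      rw [charAt_eTake hz hzt, charAt_eDrop hy₀ hz]
    have hcu₃ : ∀ z : ℝ, 0 ≤ z →
        charAt (eDrop t (eDrop x₀ u)) z = charAt u ((x₀ + t) + z) := by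
      intro z hz
      rw [charAt_eDrop ht.le hz, charAt_eDrop hx₀ (by linarith), add_assoc]
    have hcv₃ : ∀ z : ℝ, 0 ≤ z →
        charAt (eDrop t (eDrop y₀ v)) z = charAt v ((y₀ + t) + z) := by
      intro z hz
      rw [charAt_eDrop ht.le hz, charAt_eDrop hy₀ (by linarith), add_assoc]
    -- the shifted matching
    have hM'' : IsMatching (eLen (eDrop t (eDrop x₀ u))) (eLen (eDrop t (eDrop y₀ v)))
        (M'.map fun m => (m.1 - (x₀ + t), m.2.1 - (y₀ + t), m.2.2)) := by
      rw [hlu₃, hlv₃]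
      refine ⟨?_, ?_, ?_⟩
      · intro mm hmm
        obtain ⟨m', hm', rfl⟩ := List.mem_map.mp hmm
        obtain ⟨h1, h2, h3, h4, h5⟩ := hbounds m' (hmemM' m' hm')
        exact ⟨h1, by simp only [sub_nonneg]; exact le_trans (by linarith) (hXmin m' hm'),
          by simp only [sub_nonneg]; exact le_trans (by linarith) (hYmin m' hm'),
          by simp only []; linarith, by simp only []; linarith⟩
      · rw [List.pairwise_map]
        apply hpairM'.imp
        intro m m' hmm'
        constructor
        · apply Set.disjoint_left.mpr
          intro z hz1 hz2
          have hmem1 : z + (x₀ + t) ∈ mSegX m := by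
            simp only [mSegX, Set.mem_Ico] at hz1 ⊢
            constructor <;> linarith [hz1.1, hz1.2]
          have hmem2 : z + (x₀ + t) ∈ mSegX m' := by
            simp only [mSegX, Set.mem_Ico] at hz2 ⊢
            constructor <;> linarith [hz2.1, hz2.2]
          exact Set.disjoint_left.mp hmm'.1 hmem1 hmem2
        · apply Set.disjoint_left.mpr
          intro z hz1 hz2
          have hmem1 : z + (y₀ + t) ∈ mSegY m := by
            simp only [mSegY, Set.mem_Ico] at hz1 ⊢
            constructor <;> linarith [hz1.1, hz1.2]
          have hmem2 : z + (y₀ + t) ∈ mSegY m' := by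
            simp only [mSegY, Set.mem_Ico] at hz2 ⊢
            constructor <;> linarith [hz2.1, hz2.2]
          exact Set.disjoint_left.mp hmm'.2 hmem1 hmem2
      · intro mm hmm mm' hmm' s s' hs hst hs' hst' hlt
        obtain ⟨m, hm, rfl⟩ := List.mem_map.mp hmm
        obtain ⟨m', hm', rfl⟩ := List.mem_map.mp hmm'
        simp only [] at hst hst' hlt ⊢
        have := hmono m (hmemM' m hm) m' (hmemM' m' hm') s s' hs hst hs' hst'
          (by linarith)
        linarith
    -- edit sequences for the three pieces
    have hA : EditCost wdel wins wsub (eTake x₀ u) (eTake y₀ v)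
        ((∫ x in Set.Ico 0 (eLen (eTake x₀ u)), wdel (charAt (eTake x₀ u) x)) +
         (∫ x in Set.Ico 0 (eLen (eTake y₀ v)), wins (charAt (eTake y₀ v) x))) :=
      (editCost_delete_integral hru₁).trans (editCost_insert_integral hrv₁)
    have hB : EditCost wdel wins wsub (eTake t (eDrop x₀ u)) (eTake t (eDrop y₀ v))
        (∫ x in Set.Ico 0 (eLen (eTake t (eDrop x₀ u))),
          wsub (charAt (eTake t (eDrop x₀ u)) x) (charAt (eTake t (eDrop y₀ v)) x)) :=
      editCost_substAll hru₂ hrv₂ (by rw [hlu₂, hlv₂])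
    have hC := ih (M'.map fun m => (m.1 - (x₀ + t), m.2.1 - (y₀ + t), m.2.2))
      (eDrop t (eDrop x₀ u)) (eDrop t (eDrop y₀ v))
      (by simp [hlen']) hru₃ hrv₃ hM''
    have hBC := EditCost.concat hru₃ hrv₂ hB hC
    have hABC := EditCost.concat
      (by rw [rcat_eTake_eDrop hrur t]; exact hrur) hrv₁ hA hBC
    rw [rcat_eTake_eDrop hrur t, rcat_eTake_eDrop hrvr t,
      rcat_eTake_eDrop hu x₀, rcat_eTake_eDrop hv y₀] at hABC
    apply hABC.cast
    -- now the cost identity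
    -- set decompositions
    have himgX : (fun z => (x₀ + t) + z) ''
          (Set.Ico 0 (eLen (eDrop t (eDrop x₀ u))) \
            mEX (M'.map fun m => (m.1 - (x₀ + t), m.2.1 - (y₀ + t), m.2.2)))
        = Set.Ico (x₀ + t) (eLen u) \ mEX M' := by
      ext z
      simp only [Set.mem_image, Set.mem_diff, Set.mem_Ico, mem_mEX, List.mem_map]
      constructor
      · rintro ⟨w, ⟨⟨hw0, hw1⟩, hw2⟩, rfl⟩
        rw [hlu₃] at hw1
        refine ⟨⟨by linarith, by linarith⟩, ?_⟩
        rintro ⟨m', hm', hz1, hz2⟩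
        exact hw2 ⟨(m'.1 - (x₀ + t), m'.2.1 - (y₀ + t), m'.2.2), ⟨m', hm', rfl⟩,
          by constructor <;> simp only [] <;> linarith⟩
      · rintro ⟨⟨hz0, hz1⟩, hz2⟩
        refine ⟨z - (x₀ + t), ⟨⟨by linarith, by rw [hlu₃]; linarith⟩, ?_⟩, by ring⟩
        rintro ⟨mm, hmm, hc1, hc2⟩
        obtain ⟨m', hm', rfl⟩ := hmm
        simp only [] at hc1 hc2
        exact hz2 ⟨m', hm', by constructor <;> linarith⟩
    have himgY : (fun z => (y₀ + t) + z) ''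
          (Set.Ico 0 (eLen (eDrop t (eDrop y₀ v))) \
            mEY (M'.map fun m => (m.1 - (x₀ + t), m.2.1 - (y₀ + t), m.2.2)))
        = Set.Ico (y₀ + t) (eLen v) \ mEY M' := by
      ext z
      simp only [Set.mem_image, Set.mem_diff, Set.mem_Ico, mem_mEY, List.mem_map]
      constructor
      · rintro ⟨w, ⟨⟨hw0, hw1⟩, hw2⟩, rfl⟩
        rw [hlv₃] at hw1
        refine ⟨⟨by linarith, by linarith⟩, ?_⟩
        rintro ⟨m', hm', hz1, hz2⟩
        exact hw2 ⟨(m'.1 - (x₀ + t), m'.2.1 - (y₀ + t), m'.2.2), ⟨m', hm', rfl⟩,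
          by constructor <;> simp only [] <;> linarith⟩
      · rintro ⟨⟨hz0, hz1⟩, hz2⟩
        refine ⟨z - (y₀ + t), ⟨⟨by linarith, by rw [hlv₃]; linarith⟩, ?_⟩, by ring⟩
        rintro ⟨mm, hmm, hc1, hc2⟩
        obtain ⟨m', hm', rfl⟩ := hmm
        simp only [] at hc1 hc2
        exact hz2 ⟨m', hm', by constructor <;> linarith⟩
    have hsetX : Set.Ico 0 (eLen u) \ mEX M
        = Set.Ico 0 x₀ ∪ (Set.Ico (x₀ + t) (eLen u) \ mEX M') := by
      ext z
      simp only [Set.mem_diff, Set.mem_Ico, Set.mem_union, mem_mEX]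
      constructor
      · rintro ⟨⟨hz0, hz1⟩, hz2⟩
        by_cases hzx : z < x₀
        · exact Or.inl ⟨hz0, hzx⟩
        · push_neg at hzx
          have hzX : x₀ + t ≤ z := by
            by_contra hc
            push_neg at hc
            exact hz2 ⟨(x₀, y₀, t), hm₀, by constructor <;> simp only [] <;> linarith⟩
          exact Or.inr ⟨⟨hzX, hz1⟩, fun ⟨m', hm', h1, h2⟩ =>
            hz2 ⟨m', hmemM' m' hm', h1, h2⟩⟩
      · rintro (⟨hz0, hzx⟩ | ⟨⟨hzX, hz1⟩, hz2⟩)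
        · refine ⟨⟨hz0, by linarith⟩, ?_⟩
          rintro ⟨m, hm, h1, h2⟩
          rcases List.mem_cons.mp (hperm.mem_iff.mp hm) with rfl | hmM'
          · simp only [] at h1 h2; linarith
          · have := hXmin m hmM'; have := hmin m hm; linarith
        · refine ⟨⟨by linarith, hz1⟩, ?_⟩
          rintro ⟨m, hm, h1, h2⟩
          rcases List.mem_cons.mp (hperm.mem_iff.mp hm) with rfl | hmM'
          · simp only [] at h1 h2; linarith
          · exact hz2 ⟨m, hmM', h1, h2⟩
    have hsetY : Set.Ico 0 (eLen v) \ mEY M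
        = Set.Ico 0 y₀ ∪ (Set.Ico (y₀ + t) (eLen v) \ mEY M') := by
      ext z
      simp only [Set.mem_diff, Set.mem_Ico, Set.mem_union, mem_mEY]
      constructor
      · rintro ⟨⟨hz0, hz1⟩, hz2⟩
        by_cases hzy : z < y₀
        · exact Or.inl ⟨hz0, hzy⟩
        · push_neg at hzy
          have hzY : y₀ + t ≤ z := by
            by_contra hc
            push_neg at hc
            exact hz2 ⟨(x₀, y₀, t), hm₀, by constructor <;> simp only [] <;> linarith⟩
          exact Or.inr ⟨⟨hzY, hz1⟩, fun ⟨m', hm', h1, h2⟩ =>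
            hz2 ⟨m', hmemM' m' hm', h1, h2⟩⟩
      · rintro (⟨hz0, hzy⟩ | ⟨⟨hzY, hz1⟩, hz2⟩)
        · refine ⟨⟨hz0, by linarith⟩, ?_⟩
          rintro ⟨m, hm, h1, h2⟩
          rcases List.mem_cons.mp (hperm.mem_iff.mp hm) with rfl | hmM'
          · simp only [] at h1 h2; linarith
          · have := hYmin m hmM'; linarith
        · refine ⟨⟨by linarith, hz1⟩, ?_⟩
          rintro ⟨m, hm, h1, h2⟩
          rcases List.mem_cons.mp (hperm.mem_iff.mp hm) with rfl | hmM'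
          · simp only [] at h1 h2; linarith
          · exact hz2 ⟨m, hmM', h1, h2⟩
    -- deletion integral decomposition
    obtain ⟨Cd, hCd⟩ := bound_charAt wdel u
    have hmd := measurable_charAt wdel u
    have hden : (∫ x in Set.Ico 0 (eLen u) \ mEX M, wdel (charAt u x))
        = (∫ x in Set.Ico 0 (eLen (eTake x₀ u)), wdel (charAt (eTake x₀ u) x))
        + ∫ x in Set.Ico 0 (eLen (eDrop t (eDrop x₀ u))) \
            mEX (M'.map fun m => (m.1 - (x₀ + t), m.2.1 - (y₀ + t), m.2.2)),
            wdel (charAt (eDrop t (eDrop x₀ u)) x) := by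
      rw [hsetX, setIntegral_union ?disj (measurableSet_Ico.diff (measurableSet_mEX M'))
        (integrableOn_of_bound hmd hCd (by simp))
        (integrableOn_of_bound hmd hCd
          (lt_of_le_of_lt (measure_mono Set.diff_subset) (by simp)))]
      case disj =>
        apply Set.disjoint_left.mpr
        intro z hz1 hz2
        have h1 := hz1.2
        have h2 := hz2.1.1
        exact absurd h2 (by linarith [hz1.1, hz1.2])
      congr 1
      · rw [hlu₁]
        apply setIntegral_congr_fun measurableSet_Ico
        intro z hz
        show wdel (charAt u z) = wdel (charAt (eTake x₀ u) z)
        rw [hcu₁ z hz.1 hz.2]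
      · rw [← himgX, setIntegral_shift]
        apply setIntegral_congr_fun
          (measurableSet_Ico.diff (measurableSet_mEX _))
        intro z hz
        show wdel (charAt u ((x₀ + t) + z)) = wdel (charAt (eDrop t (eDrop x₀ u)) z)
        rw [hcu₃ z hz.1.1]
    -- insertion integral decomposition
    obtain ⟨Ci, hCi⟩ := bound_charAt wins v
    have hmi := measurable_charAt wins v
    have hinsid : (∫ x in Set.Ico 0 (eLen v) \ mEY M, wins (charAt v x))
        = (∫ x in Set.Ico 0 (eLen (eTake y₀ v)), wins (charAt (eTake y₀ v) x))
        + ∫ x in Set.Ico 0 (eLen (eDrop t (eDrop y₀ v))) \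
            mEY (M'.map fun m => (m.1 - (x₀ + t), m.2.1 - (y₀ + t), m.2.2)),
            wins (charAt (eDrop t (eDrop y₀ v)) x) := by
      rw [hsetY, setIntegral_union ?disj (measurableSet_Ico.diff (measurableSet_mEY M'))
        (integrableOn_of_bound hmi hCi (by simp))
        (integrableOn_of_bound hmi hCi
          (lt_of_le_of_lt (measure_mono Set.diff_subset) (by simp)))]
      case disj =>
        apply Set.disjoint_left.mpr
        intro z hz1 hz2
        have h1 := hz1.2
        have h2 := hz2.1.1
        exact absurd h2 (by linarith [hz1.1, hz1.2])
      congr 1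
      · rw [hlv₁]
        apply setIntegral_congr_fun measurableSet_Ico
        intro z hz
        show wins (charAt v z) = wins (charAt (eTake y₀ v) z)
        rw [hcv₁ z hz.1 hz.2]
      · rw [← himgY, setIntegral_shift]
        apply setIntegral_congr_fun
          (measurableSet_Ico.diff (measurableSet_mEY _))
        intro z hz
        show wins (charAt v ((y₀ + t) + z)) = wins (charAt (eDrop t (eDrop y₀ v)) z)
        rw [hcv₃ z hz.1.1]
    -- substitution sum decomposition
    have hsum : ((M.map fun m => ∫ s in (0:ℝ)..m.2.2,
          wsub (charAt u (m.1 + s)) (charAt v (m.2.1 + s))).sum)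
        = (∫ s in (0:ℝ)..t, wsub (charAt u (x₀ + s)) (charAt v (y₀ + s)))
        + ((M'.map fun m => ∫ s in (0:ℝ)..m.2.2,
            wsub (charAt u (m.1 + s)) (charAt v (m.2.1 + s))).sum) := by
      rw [(hperm.map _).sum_eq]
      simp only [List.map_cons, List.sum_cons]
    have hsub'' : (((M'.map fun m => (m.1 - (x₀ + t), m.2.1 - (y₀ + t), m.2.2)).map
          fun m => ∫ s in (0:ℝ)..m.2.2,
            wsub (charAt (eDrop t (eDrop x₀ u)) (m.1 + s))
              (charAt (eDrop t (eDrop y₀ v)) (m.2.1 + s))).sum)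
        = ((M'.map fun m => ∫ s in (0:ℝ)..m.2.2,
            wsub (charAt u (m.1 + s)) (charAt v (m.2.1 + s))).sum) := by
      rw [List.map_map]
      congr 1
      apply List.map_congr_left
      intro m' hm'
      have ht' : 0 < m'.2.2 := (hbounds m' (hmemM' m' hm')).1
      show (∫ s in (0:ℝ)..m'.2.2,
          wsub (charAt (eDrop t (eDrop x₀ u)) ((m'.1 - (x₀ + t)) + s))
            (charAt (eDrop t (eDrop y₀ v)) ((m'.2.1 - (y₀ + t)) + s))) = _
      apply intervalIntegral.integral_congr
      intro s hs
      rw [Set.uIcc_of_le ht'.le] at hs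
      have hs0 : 0 ≤ s := hs.1
      have hX' := hXmin m' hm'
      have hY' := hYmin m' hm'
      show wsub (charAt (eDrop t (eDrop x₀ u)) ((m'.1 - (x₀ + t)) + s))
          (charAt (eDrop t (eDrop y₀ v)) ((m'.2.1 - (y₀ + t)) + s))
        = wsub (charAt u (m'.1 + s)) (charAt v (m'.2.1 + s))
      rw [hcu₃ _ (by linarith), hcv₃ _ (by linarith),
        show (x₀ + t) + ((m'.1 - (x₀ + t)) + s) = m'.1 + s by ring,
        show (y₀ + t) + ((m'.2.1 - (y₀ + t)) + s) = m'.2.1 + s by ring]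
    have hsub₀ : (∫ x in Set.Ico 0 (eLen (eTake t (eDrop x₀ u))),
          wsub (charAt (eTake t (eDrop x₀ u)) x) (charAt (eTake t (eDrop y₀ v)) x))
        = ∫ s in (0:ℝ)..t, wsub (charAt u (x₀ + s)) (charAt v (y₀ + s)) := by
      rw [hlu₂, intervalIntegral.integral_of_le ht.le, integral_Ioc_eq_integral_Ioo,
        integral_Ico_eq_integral_Ioo]
      apply setIntegral_congr_fun measurableSet_Ioo
      intro z hz
      show wsub (charAt (eTake t (eDrop x₀ u)) z) (charAt (eTake t (eDrop y₀ v)) z)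
        = wsub (charAt u (x₀ + z)) (charAt v (y₀ + z))
      rw [hcu₂ z hz.1.le hz.2, hcv₂ z hz.1.le hz.2]
    -- put everything together
    simp only [mCost]
    rw [hden, hinsid, hsum, hsub'', hsub₀]
    ring

end ExpStr

open ExpStr in
/-- For every exp-matching `E` from `u` to `v` there is an exp-edit sequence
from `u` to `v` of total cost exactly the cost of `E`; consequently the
infimum of exp-edit sequence costs is at most the infimum of exp-matching
costs. -/
theorem matching_to_sequence {α : Type*} [DecidableEq α] [Inhabited α]
    (wdel wins : α → ℝ) (wsub : α → α → ℝ)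
    (hdel : ∀ a, 0 < wdel a) (hins : ∀ a, 0 < wins a)
    (hsub0 : ∀ a, wsub a a = 0) (hsubpos : ∀ a b, a ≠ b → 0 < wsub a b)
    (htri₁ : ∀ a b c, wsub a c ≤ wsub a b + wsub b c)
    (htri₂ : ∀ a b, wsub a b ≤ wdel a + wins b)
    (htri₃ : ∀ a b, wins b ≤ wins a + wsub a b)
    (htri₄ : ∀ a b, wdel a ≤ wsub a b + wdel b)
    (u v : List (α × ℝ)) (hu : RES u) (hv : RES v) :
    (∀ M : List (ℝ × ℝ × ℝ), IsMatching (eLen u) (eLen v) M →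
      EditCost wdel wins wsub u v (mCost wdel wins wsub u v M)) ∧
    sInf {c | EditCost wdel wins wsub u v c} ≤
      sInf {c | ∃ M : List (ℝ × ℝ × ℝ),
        IsMatching (eLen u) (eLen v) M ∧ c = mCost wdel wins wsub u v M} := by
  have part1 : ∀ M : List (ℝ × ℝ × ℝ), IsMatching (eLen u) (eLen v) M →
      EditCost wdel wins wsub u v (mCost wdel wins wsub u v M) :=
    fun M hM => matching_realizable wdel wins wsub M.length M u v rfl hu hv hM
  refine ⟨part1, ?_⟩
  apply csInf_le_csInf
  · refine ⟨0, fun c hc => ?_⟩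
    refine editCost_nonneg (fun a => (hdel a).le) (fun a => (hins a).le) ?_ hc
    intro a b
    by_cases h : a = b
    · subst h; rw [hsub0]
    · exact (hsubpos a b h).le
  · exact ⟨mCost wdel wins wsub u v [], [], isMatching_nil _ _, rfl⟩
  · rintro c ⟨M, hM, rfl⟩
    exact part1 M hM
end
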